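/- arXiv:2512.03628 — 5 statements merged into one kernel-verified Lean document; each statement's English description precedes it below -/
import Mathlib

section
/- The Stieltjes transform of the semicircular law on [-r,r], i.e. the measure with density (2/(π r²))·√(r²−x²) on [−r,r], satisfies the algebraic equation S(z) = 1/(z − (r/2)²·S(z)) for all z in the upper half-plane. -/
open MeasureTheory Real intervalIntegral
open scoped NNReal ENNReal

noncomputable def Jf (r : ℝ) (z : ℂ) : ℂ := ∫ θ in (0:ℝ)..π, (z - ((r * Real.cos θ : ℝ) : ℂ))⁻¹
noncomputable def Kf (r : ℝ) (z : ℂ) : ℂ := ∫ θ in (0:ℝ)..π, ((z - ((r * Real.cos θ : ℝ) : ℂ))^2)⁻¹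

lemma sub_ofReal_ne (z : ℂ) (hz : 0 < z.im) (t : ℝ) : z - (t:ℂ) ≠ 0 := by
  intro h
  have := congrArg Complex.im h
  simp [Complex.sub_im] at this
  linarith

lemma cont_u (r : ℝ) (z : ℂ) : Continuous fun θ:ℝ => z - ((r * Real.cos θ : ℝ) : ℂ) := by
  continuity

lemma cont_inv_u (r : ℝ) (z : ℂ) (hz : 0 < z.im) :
    Continuous fun θ:ℝ => (z - ((r * Real.cos θ : ℝ) : ℂ))⁻¹ :=
  (cont_u r z).inv₀ (fun θ => sub_ofReal_ne z hz _)

lemma hasDerivAt_Jf (r : ℝ) (z : ℂ) (hz : 0 < z.im) :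
    HasDerivAt (Jf r) (-(Kf r z)) z := by
  have hε : 0 < z.im / 2 := by linarith
  have him : ∀ x ∈ Metric.ball z (z.im / 2), z.im / 2 ≤ x.im := by
    intro x hx
    have : |x.im - z.im| ≤ ‖x - z‖ := by
      simpa [Complex.sub_im] using Complex.abs_im_le_norm (x - z)
    rw [Metric.mem_ball, dist_eq_norm] at hx
    have := abs_le.1 this
    linarith [this.1]
  have key := intervalIntegral.hasDerivAt_integral_of_dominated_loc_of_deriv_le
    (F := fun x θ => (x - ((r * Real.cos θ : ℝ) : ℂ))⁻¹)
    (F' := fun x θ => -(((x - ((r * Real.cos θ : ℝ) : ℂ))^2)⁻¹))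
    (x₀ := z) (a := (0:ℝ)) (b := π) (μ := volume)
    (bound := fun _ => (z.im/2)⁻¹^2) (Metric.ball_mem_nhds z hε)
    ?_ ?_ ?_ ?_ ?_ ?_
  · have h2 : (∫ θ in (0:ℝ)..π, -(((z - ((r * Real.cos θ : ℝ) : ℂ))^2)⁻¹)) = -(Kf r z) := by
      rw [intervalIntegral.integral_neg]; rfl
    rw [← h2]
    exact key.2
  · filter_upwards with x
    exact ((cont_u r x).measurable.inv).aestronglyMeasurable
  · exact ((cont_inv_u r z hz)).intervalIntegrable _ _
  · apply Continuous.aestronglyMeasurable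
    exact (((cont_u r z).pow 2).inv₀ (fun θ => pow_ne_zero _ (sub_ofReal_ne z hz _))).neg
  · filter_upwards with θ _ x hx
    have hxim : z.im/2 ≤ x.im := him x hx
    have hne : x - ((r * Real.cos θ : ℝ) : ℂ) ≠ 0 :=
      sub_ofReal_ne x (lt_of_lt_of_le hε hxim) _
    rw [norm_neg, norm_inv, norm_pow, ← inv_pow]
    gcongr
    calc z.im / 2 ≤ x.im := hxim
      _ ≤ |(x - ((r * Real.cos θ : ℝ) : ℂ)).im| := by
          rw [Complex.sub_im]
          simp only [Complex.ofReal_im, sub_zero]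
          exact le_abs_self _
      _ ≤ ‖x - ((r * Real.cos θ : ℝ) : ℂ)‖ := Complex.abs_im_le_norm _
  · exact intervalIntegrable_const
  · filter_upwards with θ _ x hx
    have hne : x - ((r * Real.cos θ : ℝ) : ℂ) ≠ 0 :=
      sub_ofReal_ne x (lt_of_lt_of_le hε (him x hx)) _
    have h1 : HasDerivAt (fun x : ℂ => x - ((r * Real.cos θ : ℝ) : ℂ)) 1 x := by
      simpa using (hasDerivAt_id x).sub_const ((r * Real.cos θ : ℝ) : ℂ)
    have : HasDerivAt (fun x : ℂ => (x - ((r * Real.cos θ : ℝ) : ℂ))⁻¹) _ x := h1.inv hne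
    rw [neg_div, one_div] at this
    exact this

lemma JK_identity (r : ℝ) (z : ℂ) (hz : 0 < z.im) :
    z * Jf r z + ((r:ℂ)^2 - z^2) * Kf r z = 0 := by
  set u : ℝ → ℂ := fun θ => z - ((r * Real.cos θ : ℝ) : ℂ) with hu
  have hune : ∀ θ, u θ ≠ 0 := fun θ => sub_ofReal_ne z hz _
  -- the integrand and its antiderivative
  set g : ℝ → ℂ := fun θ => z * (u θ)⁻¹ + ((r:ℂ)^2 - z^2) * ((u θ)^2)⁻¹ with hg
  set Φ : ℝ → ℂ := fun θ => ((-(r * Real.sin θ) : ℝ) : ℂ) * (u θ)⁻¹ with hΦ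
  have hderiv : ∀ θ ∈ Set.uIcc (0:ℝ) π, HasDerivAt Φ (g θ) θ := by
    intro θ _
    have hcos : HasDerivAt (fun θ : ℝ => ((r * Real.cos θ : ℝ) : ℂ))
        ((-(r * Real.sin θ) : ℝ) : ℂ) θ := by
      have : HasDerivAt (fun θ : ℝ => r * Real.cos θ) (-(r * Real.sin θ)) θ := by
        simpa [mul_comm] using (Real.hasDerivAt_cos θ).const_mul r
      exact this.ofReal_comp
    have husd : HasDerivAt u (((r * Real.sin θ : ℝ)) : ℂ) θ := by
      have h : HasDerivAt (fun θ : ℝ => z - ((r * Real.cos θ : ℝ) : ℂ)) _ θ := (hasDerivAt_const θ z).sub hcos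
      convert h using 1
      push_cast; ring
    have hs : HasDerivAt (fun θ : ℝ => ((-(r * Real.sin θ) : ℝ) : ℂ))
        ((-(r * Real.cos θ) : ℝ) : ℂ) θ := by
      have : HasDerivAt (fun θ : ℝ => -(r * Real.sin θ)) (-(r * Real.cos θ)) θ := by
        exact ((Real.hasDerivAt_sin θ).const_mul r).neg
      exact this.ofReal_comp
    have hinv : HasDerivAt (fun θ : ℝ => (u θ)⁻¹)
        (-((u θ)^2)⁻¹ * (((r * Real.sin θ : ℝ)) : ℂ)) θ :=
      (hasDerivAt_inv (hune θ)).comp θ husd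
    have : HasDerivAt (fun θ : ℝ => ((-(r * Real.sin θ) : ℝ) : ℂ) * (u θ)⁻¹) _ θ := hs.mul hinv
    convert this using 1
    have h1 : u θ ≠ 0 := hune θ
    have hsc : (Complex.sin θ)^2 + (Complex.cos θ)^2 = 1 := Complex.sin_sq_add_cos_sq θ
    have huθ : u θ = z - (r:ℂ) * (Real.cos θ : ℂ) := by
      simp only [hu]; push_cast; ring
    simp only [hg]
    push_cast at hsc huθ ⊢
    field_simp [h1]
    rw [huθ]
    linear_combination (-(r:ℂ)^2) * hsc
  have hcont1 : Continuous fun θ:ℝ => (u θ)⁻¹ := cont_inv_u r z hz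
  have hcont2 : Continuous fun θ:ℝ => ((u θ)^2)⁻¹ :=
    ((cont_u r z).pow 2).inv₀ (fun θ => pow_ne_zero _ (hune θ))
  have hgint : IntervalIntegrable g volume 0 π := by
    apply Continuous.intervalIntegrable
    exact (continuous_const.mul hcont1).add (continuous_const.mul hcont2)
  have hFTC := intervalIntegral.integral_eq_sub_of_hasDerivAt hderiv hgint
  have hzero : Φ π - Φ 0 = 0 := by
    simp [hΦ, Real.sin_pi, Real.sin_zero]
  rw [hzero] at hFTC
  have hsplit : (∫ θ in (0:ℝ)..π, g θ) = z * Jf r z + ((r:ℂ)^2 - z^2) * Kf r z := by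
    simp only [hg]
    rw [intervalIntegral.integral_add (show IntervalIntegrable (fun θ => z * (u θ)⁻¹) volume 0 π from (continuous_const.mul hcont1).intervalIntegrable _ _)
      (show IntervalIntegrable (fun θ => ((r:ℂ)^2 - z^2) * ((u θ)^2)⁻¹) volume 0 π from (continuous_const.mul hcont2).intervalIntegrable _ _),
      intervalIntegral.integral_const_mul, intervalIntegral.integral_const_mul]
    rfl
  rw [hsplit] at hFTC
  exact hFTC

lemma Gf_const (r : ℝ) (z w : ℂ) (hz : 0 < z.im) (hw : 0 < w.im) :
    (z^2 - (r:ℂ)^2) * (Jf r z)^2 = (w^2 - (r:ℂ)^2) * (Jf r w)^2 := by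
  set s : Set ℂ := {z | 0 < z.im} with hs
  have hconv : Convex ℝ s := convex_halfSpace_im_gt 0
  have hderiv : ∀ x ∈ s, HasDerivWithinAt (fun z => (z^2 - (r:ℂ)^2) * (Jf r z)^2)
      ((0 : ℂ → ℂ) x) s x := by
    intro x hx
    have hJ := hasDerivAt_Jf r x hx
    have h1 : HasDerivAt (fun z : ℂ => z^2 - (r:ℂ)^2) (2*x) x := by
      simpa using (hasDerivAt_pow 2 x).sub_const ((r:ℂ)^2)
    have h2 : HasDerivAt (fun z : ℂ => (Jf r z)^2) (2 * Jf r x * (-(Kf r x))) x := by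
      have : HasDerivAt (fun z : ℂ => (Jf r z)^2) _ x := hJ.pow 2
      simpa using this
    have h3 := h1.mul h2
    have hkey := JK_identity r x hx
    have : (2*x) * (Jf r x)^2 + (x^2 - (r:ℂ)^2) * (2 * Jf r x * (-(Kf r x))) = 0 := by
      linear_combination 2 * (Jf r x) * hkey
    rw [this] at h3
    exact h3.hasDerivWithinAt
  have hbound : ∀ x ∈ s, ‖(0 : ℂ → ℂ) x‖ ≤ 0 := by intro x _; simp
  have := Convex.norm_image_sub_le_of_norm_hasDerivWithin_le hderiv hbound hconv hw hz
  simp only [zero_mul] at this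
  have h0 := le_antisymm this (norm_nonneg _)
  rw [norm_eq_zero, sub_eq_zero] at h0
  exact h0

lemma Wy_bound (r : ℝ) (hr : 0 < r) (y : ℝ) (hy : 0 < y) :
    ‖(Complex.I * y) * Jf r (Complex.I * y) - (π:ℂ)‖ ≤ π * (r / y) := by
  have him : (Complex.I * (y:ℂ)).im = y := by simp
  have hzy : 0 < (Complex.I * (y:ℂ)).im := by rw [him]; exact hy
  have hu : ∀ θ:ℝ, Complex.I * y - ((r * Real.cos θ : ℝ) : ℂ) ≠ 0 :=
    fun θ => sub_ofReal_ne _ hzy _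
  have heq : (Complex.I * y) * Jf r (Complex.I * y) - (π:ℂ)
      = ∫ θ in (0:ℝ)..π, (((r * Real.cos θ : ℝ) : ℂ)
          * (Complex.I * y - ((r * Real.cos θ : ℝ) : ℂ))⁻¹) := by
    rw [Jf, ← intervalIntegral.integral_const_mul]
    have hπ : (π:ℂ) = ∫ θ in (0:ℝ)..π, (1:ℂ) := by simp
    rw [hπ, ← intervalIntegral.integral_sub]
    · apply intervalIntegral.integral_congr
      intro θ _
      have hne := hu θ
      push_cast at hne ⊢
      field_simp
      ring
    · exact (continuous_const.mul (cont_inv_u r _ hzy)).intervalIntegrable _ _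
    · exact intervalIntegrable_const
  rw [heq]
  have hle := intervalIntegral.norm_integral_le_of_norm_le_const
    (a := (0:ℝ)) (b := π) (C := r / y)
    (f := fun θ => (((r * Real.cos θ : ℝ) : ℂ)
        * (Complex.I * y - ((r * Real.cos θ : ℝ) : ℂ))⁻¹)) ?_
  · calc _ ≤ r / y * |π - 0| := hle
      _ = π * (r / y) := by rw [abs_of_nonneg (by rw [sub_zero]; exact Real.pi_nonneg)]; ring
  · intro θ _
    rw [norm_mul, norm_inv]
    have hub : y ≤ ‖Complex.I * y - ((r * Real.cos θ : ℝ) : ℂ)‖ := by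
      calc y = |(Complex.I * y - ((r * Real.cos θ : ℝ) : ℂ)).im| := by
            simp [Complex.sub_im, abs_of_pos hy]
        _ ≤ _ := Complex.abs_im_le_norm _
    have h2 : ‖((r * Real.cos θ : ℝ) : ℂ)‖ ≤ r := by
      rw [Complex.norm_real]
      rw [Real.norm_eq_abs, abs_mul, abs_of_pos hr]
      nlinarith [abs_cos_le_one θ, abs_nonneg (Real.cos θ), hr.le]
    rw [div_eq_mul_inv]
    have hinv : ‖Complex.I * y - ((r * Real.cos θ : ℝ) : ℂ)‖⁻¹ ≤ y⁻¹ := by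
      apply inv_anti₀ hy hub
    exact mul_le_mul h2 hinv (by positivity) hr.le

lemma Jf_sq (r : ℝ) (hr : 0 < r) (z : ℂ) (hz : 0 < z.im) :
    (z^2 - (r:ℂ)^2) * (Jf r z)^2 = ((π:ℝ):ℂ)^2 := by
  set W : ℝ → ℂ := fun y => (Complex.I * y) * Jf r (Complex.I * y) with hWdef
  have hW : Filter.Tendsto W Filter.atTop (nhds ((π:ℝ):ℂ)) := by
    have hsub : Filter.Tendsto (fun y => W y - ((π:ℝ):ℂ)) Filter.atTop (nhds 0) := by
      apply squeeze_zero_norm' (a := fun y => π * (r / y))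
      · filter_upwards [Filter.eventually_gt_atTop (0:ℝ)] with y hy
        exact Wy_bound r hr y hy
      · have h1 : Filter.Tendsto (fun y:ℝ => r / y) Filter.atTop (nhds 0) :=
          Filter.Tendsto.div_atTop tendsto_const_nhds Filter.tendsto_id
        have := h1.const_mul π
        simpa using this
    have := hsub.add (tendsto_const_nhds (x := ((π:ℝ):ℂ)))
    simpa using this
  have hF : Filter.Tendsto (fun y:ℝ => (1:ℂ) + ((r^2/y^2 : ℝ):ℂ))
      Filter.atTop (nhds 1) := by
    have h1 : Filter.Tendsto (fun y:ℝ => r^2/y^2) Filter.atTop (nhds 0) := by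
      apply Filter.Tendsto.div_atTop (tendsto_const_nhds)
      exact Filter.tendsto_pow_atTop (by norm_num)
    have h2 := (Complex.continuous_ofReal.tendsto 0).comp h1
    have := (tendsto_const_nhds (x := (1:ℂ))).add h2
    simpa using this
  have hGW : ∀ᶠ y in Filter.atTop, ((Complex.I*(y:ℝ))^2 - (r:ℂ)^2) * (Jf r (Complex.I*y))^2
      = ((1:ℂ) + ((r^2/y^2 : ℝ):ℂ)) * (W y)^2 := by
    filter_upwards [Filter.eventually_gt_atTop (0:ℝ)] with y hy
    have hyne : (y:ℂ) ≠ 0 := by exact_mod_cast hy.ne'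
    simp only [hWdef]
    have hI2 : (Complex.I)^2 = -1 := Complex.I_sq
    push_cast
    field_simp
    ring_nf
    rw [hI2]
    ring
  have hTend1 : Filter.Tendsto (fun y:ℝ => ((Complex.I*(y:ℝ))^2 - (r:ℂ)^2) * (Jf r (Complex.I*y))^2)
      Filter.atTop (nhds (((π:ℝ):ℂ)^2)) := by
    have := hF.mul (hW.pow 2)
    rw [one_mul] at this
    exact this.congr' (Filter.EventuallyEq.symm hGW)
  have hconst : ∀ᶠ y in Filter.atTop, ((Complex.I*(y:ℝ))^2 - (r:ℂ)^2) * (Jf r (Complex.I*y))^2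
      = (z^2 - (r:ℂ)^2) * (Jf r z)^2 := by
    filter_upwards [Filter.eventually_gt_atTop (0:ℝ)] with y hy
    exact Gf_const r (Complex.I*y) z (by simpa using hy) hz
  have hTend2 : Filter.Tendsto (fun y:ℝ => ((Complex.I*(y:ℝ))^2 - (r:ℂ)^2) * (Jf r (Complex.I*y))^2)
      Filter.atTop (nhds ((z^2 - (r:ℂ)^2) * (Jf r z)^2)) :=
    tendsto_const_nhds.congr' (Filter.EventuallyEq.symm hconst)
  exact tendsto_nhds_unique hTend2 hTend1

lemma A_eq (r : ℝ) (hr : 0 < r) (z : ℂ) (hz : 0 < z.im) :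
    (∫ x in (-r)..r, ((Real.sqrt (r^2 - x^2) : ℝ):ℂ) * (z - (x:ℂ))⁻¹)
      = ((π:ℝ):ℂ) * z + ((r:ℂ)^2 - z^2) * Jf r z := by
  set g : ℝ → ℂ := fun x => ((Real.sqrt (r^2 - x^2) : ℝ):ℂ) * (z - (x:ℂ))⁻¹ with hgdef
  have hgcont : Continuous g := by
    apply Continuous.mul
    · exact Complex.continuous_ofReal.comp
        ((continuous_const.sub (continuous_pow 2)).sqrt)
    · exact ((continuous_const.sub Complex.continuous_ofReal).inv₀
        (fun x => sub_ofReal_ne z hz x))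
  have hsubst := intervalIntegral.integral_comp_smul_deriv
    (a := (0:ℝ)) (b := π) (f := fun θ => r * Real.cos θ)
    (f' := fun θ => -(r * Real.sin θ)) (g := g)
    (fun θ _ => by simpa [mul_comm] using ((Real.hasDerivAt_cos θ).const_mul r))
    ((continuous_const.mul Real.continuous_sin).neg).continuousOn hgcont
  have hends : (∫ x in (r * Real.cos 0)..(r * Real.cos π), g x) = -(∫ x in (-r)..r, g x) := by
    rw [Real.cos_zero, Real.cos_pi, mul_one]
    rw [intervalIntegral.integral_symm]
    norm_num
  rw [hends] at hsubst
  have hA : (∫ x in (-r)..r, g x)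
      = ∫ θ in (0:ℝ)..π, (r * Real.sin θ) • g (r * Real.cos θ) := by
    have := congrArg Neg.neg hsubst
    rw [neg_neg] at this
    rw [← this, ← intervalIntegral.integral_neg]
    apply intervalIntegral.integral_congr
    intro θ _
    simp [neg_smul]
  rw [hA]
  have hpt : ∀ θ ∈ Set.uIcc (0:ℝ) π,
      (r * Real.sin θ) • g (r * Real.cos θ)
        = ((r:ℂ)^2 - z^2) * (z - ((r * Real.cos θ : ℝ):ℂ))⁻¹ + (z + ((r * Real.cos θ : ℝ):ℂ)) := by
    intro θ hθ
    have hθ' : θ ∈ Set.Icc (0:ℝ) π := by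
      rwa [Set.uIcc_of_le Real.pi_nonneg] at hθ
    have hsin : 0 ≤ Real.sin θ := Real.sin_nonneg_of_mem_Icc hθ'
    have hsqrt : Real.sqrt (r^2 - (r * Real.cos θ)^2) = r * Real.sin θ := by
      have : r^2 - (r * Real.cos θ)^2 = (r * Real.sin θ)^2 := by
        have := Real.sin_sq_add_cos_sq θ
        nlinarith
      rw [this, Real.sqrt_sq (by positivity)]
    have hu : z - ((r * Real.cos θ : ℝ):ℂ) ≠ 0 := sub_ofReal_ne z hz _
    simp only [hgdef, hsqrt]
    have hsc : (Complex.sin θ)^2 + (Complex.cos θ)^2 = 1 := Complex.sin_sq_add_cos_sq θ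
    rw [Complex.real_smul]
    push_cast at hu ⊢
    field_simp
    ring_nf
    linear_combination ((r:ℂ)^2) * hsc
  rw [intervalIntegral.integral_congr hpt]
  have hint1 : IntervalIntegrable (fun θ => ((r:ℂ)^2 - z^2) * (z - ((r * Real.cos θ : ℝ):ℂ))⁻¹)
      volume 0 π := (continuous_const.mul (cont_inv_u r z hz)).intervalIntegrable _ _
  have hint2 : IntervalIntegrable (fun θ:ℝ => z + ((r * Real.cos θ : ℝ):ℂ)) volume 0 π :=
    (continuous_const.add (by continuity)).intervalIntegrable _ _
  rw [intervalIntegral.integral_add hint1 hint2, intervalIntegral.integral_const_mul]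
  have h3 : (∫ θ in (0:ℝ)..π, (z + ((r * Real.cos θ : ℝ):ℂ))) = ((π:ℝ):ℂ) * z := by
    rw [intervalIntegral.integral_add intervalIntegrable_const
      ((by continuity : Continuous fun θ:ℝ => ((r * Real.cos θ : ℝ):ℂ)).intervalIntegrable _ _)]
    have h4 : (∫ θ in (0:ℝ)..π, ((r * Real.cos θ : ℝ):ℂ)) = (((∫ θ in (0:ℝ)..π, r * Real.cos θ) : ℝ) : ℂ) :=
      intervalIntegral.integral_ofReal
    rw [h4, intervalIntegral.integral_const_mul, integral_cos]
    simp [Complex.real_smul]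
  rw [h3]
  change ((r:ℂ)^2 - z^2) * Jf r z + _ = _
  ring

/-- The semicircular law on `[-r, r]`: density `(2/(π r²))·√(r²−x²)` on `[−r, r]`. -/
noncomputable def semicircleMeasure (r : ℝ) : Measure ℝ :=
  volume.withDensity fun x =>
    ENNReal.ofReal (if x ∈ Set.Icc (-r) r then (2 / (π * r ^ 2)) * Real.sqrt (r ^ 2 - x ^ 2) else 0)

/-- The Stieltjes transform of a measure on ℝ. -/
noncomputable def stieltjes (μ : Measure ℝ) (z : ℂ) : ℂ :=
  ∫ x : ℝ, (z - (x : ℂ))⁻¹ ∂μ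

lemma stieltjes_semicircle_conv (r : ℝ) (hr : 0 < r) (z : ℂ) (hz : 0 < z.im) :
    stieltjes (semicircleMeasure r) z
      = ((2 / (π * r ^ 2) : ℝ) : ℂ) * ∫ x in (-r)..r, ((Real.sqrt (r^2 - x^2) : ℝ):ℂ) * (z - (x:ℂ))⁻¹ := by
  set gr : ℝ → ℝ := fun x => if x ∈ Set.Icc (-r) r then (2 / (π * r ^ 2)) * Real.sqrt (r ^ 2 - x ^ 2) else 0 with hgr
  have hgrm : Measurable gr := by
    apply Measurable.ite measurableSet_Icc
    · exact (continuous_const.mul (continuous_const.sub (continuous_pow 2)).sqrt).measurable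
    · exact measurable_const
  have hgrnn : ∀ x, 0 ≤ gr x := by
    intro x
    simp only [hgr]
    split
    · positivity
    · exact le_refl 0
  rw [stieltjes, semicircleMeasure]
  rw [show (fun x =>
    ENNReal.ofReal (if x ∈ Set.Icc (-r) r then (2 / (π * r ^ 2)) * Real.sqrt (r ^ 2 - x ^ 2) else 0))
      = fun x => ((Real.toNNReal (gr x) : ℝ≥0) : ℝ≥0∞) from rfl]
  rw [integral_withDensity_eq_integral_smul (f := fun x => (gr x).toNNReal)
    (measurable_real_toNNReal.comp hgrm) (fun x : ℝ => (z - (x:ℂ))⁻¹)]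
  have hsmul : (fun x => (Real.toNNReal (gr x) : ℝ≥0) • (z - (x:ℂ))⁻¹)
      = Set.indicator (Set.Icc (-r) r)
          (fun x => (((2 / (π * r ^ 2)) * Real.sqrt (r ^ 2 - x ^ 2) : ℝ):ℂ) * (z - (x:ℂ))⁻¹) := by
    funext x
    rw [NNReal.smul_def, Real.coe_toNNReal _ (hgrnn x)]
    by_cases hx : x ∈ Set.Icc (-r) r
    · rw [Set.indicator_of_mem hx]
      simp only [hgr, if_pos hx]
      rw [Complex.real_smul]
    · rw [Set.indicator_of_notMem hx]
      simp only [hgr, if_neg hx]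
      simp
  rw [hsmul, MeasureTheory.integral_indicator measurableSet_Icc, integral_Icc_eq_integral_Ioc,
    ← intervalIntegral.integral_of_le (by linarith : -r ≤ r), ← intervalIntegral.integral_const_mul]
  apply intervalIntegral.integral_congr
  intro x _
  push_cast
  ring

theorem stieltjes_semicircle_eq (r : ℝ) (hr : 0 < r) (z : ℂ) (hz : 0 < z.im) :
    stieltjes (semicircleMeasure r) z
      = 1 / (z - ((r : ℂ) / 2) ^ 2 * stieltjes (semicircleMeasure r) z) := by
  set S := stieltjes (semicircleMeasure r) z with hS
  have hconv := stieltjes_semicircle_conv r hr z hz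
  have hAeq := A_eq r hr z hz
  have hJsq := Jf_sq r hr z hz
  have hrc : (r:ℂ) ≠ 0 := by exact_mod_cast hr.ne'
  have hπc : ((π:ℝ):ℂ) ≠ 0 := by exact_mod_cast Real.pi_ne_zero
  set J := Jf r z with hJ
  have hSA : S = 2 * (((π:ℝ):ℂ) * z + ((r:ℂ)^2 - z^2) * J) / (((π:ℝ):ℂ) * (r:ℂ)^2) := by
    rw [hS, hconv, hAeq]
    push_cast
    ring
  have hpoly : 2*((π:ℝ):ℂ)*(r:ℂ)^2*z*(((π:ℝ):ℂ) * z + ((r:ℂ)^2 - z^2) * J)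
      - (r:ℂ)^2*(((π:ℝ):ℂ) * z + ((r:ℂ)^2 - z^2) * J)^2 = (((π:ℝ):ℂ)*(r:ℂ)^2)^2 := by
    linear_combination (-(r:ℂ)^2*(z^2-(r:ℂ)^2)) * hJsq
  have hq : (((π:ℝ):ℂ) * (r:ℂ)^2) ≠ 0 := mul_ne_zero hπc (pow_ne_zero 2 hrc)
  have hSq : S * (((π:ℝ):ℂ) * (r:ℂ)^2) = 2 * (((π:ℝ):ℂ) * z + ((r:ℂ)^2 - z^2) * J) := by
    rw [hSA]
    field_simp
  have hmain : S * (z - ((r : ℂ) / 2) ^ 2 * S) = 1 := by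
    apply mul_left_cancel₀ (pow_ne_zero 2 hq)
    rw [mul_one]
    have hexpand : (((π:ℝ):ℂ) * (r:ℂ)^2)^2 * (S * (z - ((r : ℂ) / 2) ^ 2 * S))
        = (S * (((π:ℝ):ℂ) * (r:ℂ)^2)) * (((π:ℝ):ℂ) * (r:ℂ)^2) * z
          - ((r:ℂ)^2/4) * (S * (((π:ℝ):ℂ) * (r:ℂ)^2))^2 := by ring
    rw [hexpand, hSq]
    linear_combination hpoly
  have hden : z - ((r : ℂ) / 2) ^ 2 * S ≠ 0 := by
    intro h
    rw [h, mul_zero] at hmain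
    exact one_ne_zero hmain.symm
  rw [eq_div_iff hden]
  exact hmain
end

section
/- Let A be an N×N Hermitian complex matrix, let i be an index, let a_i ∈ ℂ^{N−1} be the i-th column of A with its i-th entry removed, and let A^{(i)} be the (N−1)×(N−1) matrix obtained from A by deleting row i and column i. Then for every z ∈ ℂ⁺, the (i,i) entry of the resolvent satisfies (zI_N − A)^{-1}(i,i) = 1/(z − A(i,i) − a_i* (zI_{N−1} − A^{(i)})^{-1} a_i). -/
open Matrix

lemma star_dot_key {n : Type*} [Fintype n] (a w : n → ℂ) :
    star (star a ⬝ᵥ w) = star w ⬝ᵥ a := by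
  rw [star_dotProduct, star_star]

lemma resolvent_det_isUnit {n : Type*} [Fintype n] [DecidableEq n]
    (M : Matrix n n ℂ) (hM : M.IsHermitian) (z : ℂ) (hz : 0 < z.im) :
    IsUnit (z • (1 : Matrix n n ℂ) - M).det := by
  rw [isUnit_iff_ne_zero]
  intro h
  obtain ⟨v, hv, hvz⟩ := (Matrix.exists_mulVec_eq_zero_iff).2 h
  have hMv : M.mulVec v = z • v := by
    have h2 := hvz
    rw [sub_mulVec, smul_mulVec, one_mulVec, sub_eq_zero] at h2
    exact h2.symm
  have hc : star (star v ⬝ᵥ v) = star v ⬝ᵥ v := star_dot_key v v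
  have hreal : star (star v ⬝ᵥ M.mulVec v) = star v ⬝ᵥ M.mulVec v := by
    rw [star_dot_key, star_mulVec, hM.eq, ← dotProduct_mulVec]
  rw [hMv, dotProduct_smul, smul_eq_mul, star_mul', hc] at hreal
  have hzz : z - star z ≠ 0 := by
    intro hE
    apply_fun Complex.im at hE
    simp [Complex.sub_im] at hE
    linarith
  have h3 : (z - star z) * (star v ⬝ᵥ v) = 0 := by
    rw [sub_mul, hreal, sub_self]
  have hcz : star v ⬝ᵥ v = 0 := (mul_eq_zero.mp h3).resolve_left hzz
  have hsum : ∑ x, Complex.normSq (v x) = 0 := by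
    have h4 : ((∑ x, Complex.normSq (v x) : ℝ) : ℂ) = 0 := by
      push_cast
      rw [← hcz]
      simp [dotProduct, Complex.normSq_eq_conj_mul_self, Complex.star_def]
    exact_mod_cast h4
  have hall : ∀ x ∈ Finset.univ, Complex.normSq (v x) = 0 :=
    (Finset.sum_eq_zero_iff_of_nonneg (fun x _ => Complex.normSq_nonneg (v x))).mp hsum
  exact hv (funext fun x => Complex.normSq_eq_zero.mp (hall x (Finset.mem_univ x)))

lemma blk_entry {n : ℕ} (R C : Fin n → ℂ) (M : Matrix (Fin n) (Fin n) ℂ) :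
    ((Matrix.of fun (_ : Unit) k => -R k) * M *
        (Matrix.of fun j (_ : Unit) => -C j)) Unit.unit Unit.unit
      = R ⬝ᵥ M.mulVec C := by
  simp only [Matrix.mul_apply, dotProduct, mulVec, Matrix.of_apply, Finset.sum_mul,
    Finset.mul_sum]
  rw [Finset.sum_comm]
  exact Finset.sum_congr rfl fun k _ => Finset.sum_congr rfl fun j _ => by ring

/-- Schur-complement formula for a diagonal entry of the resolvent of a Hermitian matrix. -/
theorem resolvent_diag_entry {N : ℕ} (A : Matrix (Fin (N + 1)) (Fin (N + 1)) ℂ)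
    (hA : A.IsHermitian) (i : Fin (N + 1)) (z : ℂ) (hz : 0 < z.im) :
    (z • (1 : Matrix (Fin (N + 1)) (Fin (N + 1)) ℂ) - A)⁻¹ i i =
      (z - A i i -
        (star (fun j : Fin N => A (i.succAbove j) i)) ⬝ᵥ
          ((z • (1 : Matrix (Fin N) (Fin N) ℂ) - A.submatrix i.succAbove i.succAbove)⁻¹).mulVec
            (fun j : Fin N => A (i.succAbove j) i))⁻¹ := by
  set B : Matrix (Fin (N + 1)) (Fin (N + 1)) ℂ := z • 1 - A with hBdef
  set D : Matrix (Fin N) (Fin N) ℂ :=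
    z • 1 - A.submatrix i.succAbove i.succAbove with hDdef
  have hDu : IsUnit D.det :=
    resolvent_det_isUnit _ (hA.submatrix i.succAbove) z hz
  letI : Invertible D := D.invertibleOfIsUnitDet hDu
  have hBu : IsUnit B.det := resolvent_det_isUnit A hA z hz
  let e : Fin (N + 1) ≃ Fin N ⊕ Unit :=
    (finSuccEquiv' i).trans (Equiv.optionEquivSumPUnit _)
  let Cm : Matrix (Fin N) Unit ℂ := Matrix.of fun j _ => -A (i.succAbove j) i
  let Rm : Matrix Unit (Fin N) ℂ := Matrix.of fun _ k => -A i (i.succAbove k)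
  let P : Matrix Unit Unit ℂ := Matrix.of fun _ _ => z - A i i
  have hei : e i = Sum.inr Unit.unit := by
    simp [e, finSuccEquiv'_at]
  have hes : ∀ j, e (i.succAbove j) = Sum.inl j := by
    intro j; simp [e, finSuccEquiv'_succAbove]
  have hblk : B = (fromBlocks D Cm Rm P).submatrix e e := by
    ext a b
    rcases eq_or_ne a i with ha | ha
    · rcases eq_or_ne b i with hb | hb
      · simp [ha, hb, hei, fromBlocks, P, hBdef, one_apply]
      · obtain ⟨b', rfl⟩ := Fin.exists_succAbove_eq hb
        simp [ha, hei, hes, fromBlocks, Rm, hBdef, one_apply,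
          (Fin.succAbove_ne i b').symm]
    · obtain ⟨a', rfl⟩ := Fin.exists_succAbove_eq ha
      rcases eq_or_ne b i with hb | hb
      · simp [hb, hei, hes, fromBlocks, Cm, hBdef, one_apply, Fin.succAbove_ne i a']
      · obtain ⟨b', rfl⟩ := Fin.exists_succAbove_eq hb
        simp [hes, fromBlocks, D, hBdef, one_apply,
          Fin.succAbove_right_injective.eq_iff]
  -- Schur complement
  set S : Matrix Unit Unit ℂ := P - Rm * ⅟D * Cm with hSdef
  have hdet : B.det = D.det * S.det := by
    rw [hblk, det_submatrix_equiv_self, det_fromBlocks₁₁]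
  have hSu : IsUnit S.det := by
    have := hBu
    rw [hdet] at this
    exact (IsUnit.mul_iff.mp this).2
  letI : Invertible S := S.invertibleOfIsUnitDet hSu
  letI : Invertible (fromBlocks D Cm Rm P) := fromBlocks₁₁Invertible D Cm Rm P
  have hinv : B⁻¹ i i = S⁻¹ Unit.unit Unit.unit := by
    rw [hblk, inv_submatrix_equiv, submatrix_apply, hei,
      ← invOf_eq_nonsing_inv, invOf_fromBlocks₁₁_eq]
    simp [fromBlocks, invOf_eq_nonsing_inv]
    rw [hSdef]
    simp [Matrix.sub_apply, invOf_eq_nonsing_inv]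
  have hS11 : S⁻¹ Unit.unit Unit.unit = (S Unit.unit Unit.unit)⁻¹ := by
    rw [inv_def, adjugate_subsingleton, Matrix.smul_apply, one_apply_eq, det_unique,
      smul_eq_mul, mul_one, Ring.inverse_eq_inv']
  have hSval : S Unit.unit Unit.unit =
      z - A i i -
        (star (fun j : Fin N => A (i.succAbove j) i)) ⬝ᵥ
          (D⁻¹).mulVec (fun j : Fin N => A (i.succAbove j) i) := by
    have hstar : (star (fun j : Fin N => A (i.succAbove j) i)) =
        fun k => A i (i.succAbove k) := by
      funext k
      exact hA.apply i (i.succAbove k)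
    rw [hSdef, Matrix.sub_apply, invOf_eq_nonsing_inv, hstar]
    have : Rm * D⁻¹ * Cm = (Matrix.of fun (_ : Unit) k => -(A i (i.succAbove k))) * D⁻¹ *
        (Matrix.of fun j (_ : Unit) => -(A (i.succAbove j) i)) := rfl
    rw [this, blk_entry]
    rfl
  rw [hinv, hS11, hSval]
end

section
/- Let b be a real random variable with E[b²] < ∞ and let (b_i)_{i≥1} be i.i.d. copies of b. Fix z ∈ ℂ with Im z > E[b²] and suppose E[b²]/(Im z)² < 1. Define the random sequence s_1 = 1/z and s_{i+1} = 1/(z − b_i²·s_i). Then the laws of s_i (as probability measures on ℂ) form a Cauchy sequence for the Wasserstein-1 distance, and hence converge in distribution to a random variable S supported in {w : Im w ≤ 0, |w| ≤ 1/Im z} satisfying S =_d 1/(z − b²·S) with b independent of S on the right-hand side. -/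
open MeasureTheory ProbabilityTheory Filter



namespace TridiagAux

/-- The good domain. -/
def Dset (z : ℂ) : Set ℂ := {w | w.im ≤ 0 ∧ ‖w‖ ≤ 1 / z.im}

lemma isClosed_Dset (z : ℂ) : IsClosed (Dset z) := by
  have h1 : IsClosed {w : ℂ | w.im ≤ 0} := isClosed_le Complex.continuous_im continuous_const
  have h2 : IsClosed {w : ℂ | ‖w‖ ≤ 1 / z.im} :=
    isClosed_le continuous_norm continuous_const
  exact h1.inter h2

variable {z : ℂ} (hv : 0 < z.im)

lemma im_sub_ge (c : ℝ) {w : ℂ} (hw : w ∈ Dset z) : z.im ≤ (z - (c:ℂ)^2 * w).im := by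
  have : (z - (c:ℂ)^2 * w).im = z.im - c^2 * w.im := by
    simp [Complex.sub_im, Complex.mul_im, ← Complex.ofReal_pow]
  rw [this]
  nlinarith [sq_nonneg c, hw.1]

lemma abs_sub_ge (c : ℝ) {w : ℂ} (hw : w ∈ Dset z) : z.im ≤ ‖z - (c:ℂ)^2 * w‖ := by
  calc z.im ≤ (z - (c:ℂ)^2 * w).im := im_sub_ge c hw
  _ ≤ |(z - (c:ℂ)^2 * w).im| := le_abs_self _
  _ ≤ ‖z - (c:ℂ)^2 * w‖ := Complex.abs_im_le_norm _

include hv in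
lemma sub_ne_zero' (c : ℝ) {w : ℂ} (hw : w ∈ Dset z) : z - (c:ℂ)^2 * w ≠ 0 := by
  intro h
  have := abs_sub_ge c hw
  rw [h] at this; simp at this; linarith

include hv in
lemma F_mem (c : ℝ) {w : ℂ} (hw : w ∈ Dset z) : (z - (c:ℂ)^2 * w)⁻¹ ∈ Dset z := by
  constructor
  · rw [Complex.inv_im]
    have h1 : 0 < (z - (c:ℂ)^2 * w).im := lt_of_lt_of_le hv (im_sub_ge c hw)
    have h2 : 0 ≤ Complex.normSq (z - (c:ℂ)^2 * w) := Complex.normSq_nonneg _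
    apply div_nonpos_of_nonpos_of_nonneg (by linarith) h2
  · rw [norm_inv]
    exact one_div z.im ▸ (by
      apply inv_anti₀ hv (abs_sub_ge c hw))

omit hv in
lemma mem_abs_le {w : ℂ} (hw : w ∈ Dset z) : ‖w‖ ≤ 1 / z.im := hw.2

include hv in
lemma one_div_z_mem : 1 / z ∈ Dset z := by
  have hz0 : z ≠ 0 := by
    intro h; rw [h] at hv; simp at hv
  constructor
  · rw [one_div, Complex.inv_im]
    apply div_nonpos_of_nonpos_of_nonneg (by linarith) (Complex.normSq_nonneg _)
  · rw [one_div, norm_inv, one_div]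
    apply inv_anti₀ hv
    calc z.im ≤ |z.im| := le_abs_self _
    _ ≤ ‖z‖ := Complex.abs_im_le_norm _

include hv in
lemma F_lip (c : ℝ) {w w' : ℂ} (hw : w ∈ Dset z) (hw' : w' ∈ Dset z) :
    ‖(z - (c:ℂ)^2 * w)⁻¹ - (z - (c:ℂ)^2 * w')⁻¹‖
      ≤ c^2 / z.im^2 * ‖w - w'‖ := by
  have h1 := sub_ne_zero' hv c hw
  have h2 := sub_ne_zero' hv c hw'
  have key : (z - (c:ℂ)^2 * w)⁻¹ - (z - (c:ℂ)^2 * w')⁻¹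
      = (c:ℂ)^2 * (w - w') * ((z - (c:ℂ)^2 * w)⁻¹ * (z - (c:ℂ)^2 * w')⁻¹) := by
    field_simp
    ring
  rw [key]
  rw [norm_mul, norm_mul, norm_mul, norm_inv, norm_inv, norm_pow]
  have hca : ‖(c:ℂ)‖ = |c| := by rw [Complex.norm_real, Real.norm_eq_abs]
  rw [hca]
  have hb1 : (‖z - (c:ℂ)^2 * w‖)⁻¹ ≤ (z.im)⁻¹ :=
    inv_anti₀ hv (abs_sub_ge c hw)
  have hb2 : (‖z - (c:ℂ)^2 * w'‖)⁻¹ ≤ (z.im)⁻¹ :=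
    inv_anti₀ hv (abs_sub_ge c hw')
  have habs : (0:ℝ) ≤ ‖w - w'‖ := norm_nonneg _
  have h3 : |c|^2 = c^2 := sq_abs c
  calc |c|^2 * ‖w - w'‖ * ((‖z - (c:ℂ)^2 * w‖)⁻¹ * (‖z - (c:ℂ)^2 * w'‖)⁻¹)
      ≤ |c|^2 * ‖w - w'‖ * ((z.im)⁻¹ * (z.im)⁻¹) := by
        apply mul_le_mul_of_nonneg_left
        · apply mul_le_mul hb1 hb2 (by positivity) (by positivity)
        · positivity
  _ = c^2 / z.im^2 * ‖w - w'‖ := by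
        rw [h3]
        have : (z.im)⁻¹ * (z.im)⁻¹ = (z.im^2)⁻¹ := by rw [← mul_inv, sq]
        rw [this, div_eq_mul_inv]; ring

omit hv in
lemma diam_bound {w w' : ℂ} (hw : w ∈ Dset z) (hw' : w' ∈ Dset z) :
    ‖w - w'‖ ≤ 2 / z.im := by
  calc ‖w - w'‖ ≤ ‖w‖ + ‖w'‖ := by
        simpa using norm_sub_le w w'
  _ ≤ 1 / z.im + 1 / z.im := add_le_add hw.2 hw'.2
  _ = 2 / z.im := by ring





variable {Ω : Type*}

/-- Backward iteration: `TT z b j n` applies `F (b j), F (b (j+1)), …, F (b (j+n-1))`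
(from the outside in) to `1/z`. -/
noncomputable def TT (z : ℂ) (b : ℕ → Ω → ℝ) : ℕ → ℕ → Ω → ℂ
  | _, 0 => fun _ => 1 / z
  | j, n+1 => fun ω => (z - ((b j ω : ℂ))^2 * TT z b (j+1) n ω)⁻¹

/-- The same iteration as a function of a tuple. -/
noncomputable def gfun (z : ℂ) : (n : ℕ) → (Fin n → ℝ) → ℂ
  | 0 => fun _ => 1 / z
  | n+1 => fun x => (z - ((x 0 : ℝ) : ℂ)^2 * gfun z n (fun i => x i.succ))⁻¹

lemma gfun_measurable (z : ℂ) : ∀ n, Measurable (gfun z n) := by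
  intro n
  induction n with
  | zero => exact measurable_const
  | succ n ih =>
    show Measurable fun x : Fin (n+1) → ℝ => (z - ((x 0 : ℝ) : ℂ)^2 * gfun z n (fun i => x i.succ))⁻¹
    apply Measurable.inv
    apply Measurable.sub measurable_const
    apply Measurable.mul
    · exact (Complex.measurable_ofReal.comp (measurable_pi_apply 0)).pow_const 2
    · exact ih.comp (measurable_pi_lambda _ fun i => measurable_pi_apply _)

lemma TT_eq_gfun (z : ℂ) (b : ℕ → Ω → ℝ) : ∀ (n j : ℕ) (ω : Ω),
    TT z b j n ω = gfun z n (fun i => b (j + (i : ℕ)) ω) := by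
  intro n
  induction n with
  | zero => intro j ω; rfl
  | succ n ih =>
    intro j ω
    show (z - ((b j ω : ℂ))^2 * TT z b (j+1) n ω)⁻¹ = _
    show _ = (z - ((b (j + ((0 : Fin (n+1)) : ℕ)) ω : ℂ))^2
        * gfun z n (fun i => b (j + ((Fin.succ i : Fin (n+1)) : ℕ)) ω))⁻¹
    have h0 : j + ((0 : Fin (n+1)) : ℕ) = j := by simp
    have h1 : (fun i : Fin n => b (j + ((Fin.succ i : Fin (n+1)) : ℕ)) ω)
        = fun i : Fin n => b ((j+1) + (i : ℕ)) ω := by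
      funext i
      have : j + ((Fin.succ i : Fin (n+1)) : ℕ) = (j+1) + (i : ℕ) := by
        rw [Fin.val_succ]; omega
      rw [this]
    rw [h0, h1, ih (j+1) ω]

lemma TT_mem (z : ℂ) (hv : 0 < z.im) (b : ℕ → Ω → ℝ) : ∀ (n j : ℕ) (ω : Ω),
    TT z b j n ω ∈ Dset z := by
  intro n
  induction n with
  | zero => intro j ω; exact one_div_z_mem hv
  | succ n ih => intro j ω; exact F_mem hv _ (ih (j+1) ω)

lemma TT_measurable {m' : MeasurableSpace Ω} (z : ℂ) (b : ℕ → Ω → ℝ)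
    (hb : ∀ j, 1 ≤ j → Measurable[m'] (b j)) :
    ∀ (n j : ℕ), 1 ≤ j → Measurable[m'] (TT z b j n) := by
  intro n
  induction n with
  | zero => intro j _; exact measurable_const
  | succ n ih =>
    intro j hj
    show Measurable[m'] fun ω => (z - ((b j ω : ℂ))^2 * TT z b (j+1) n ω)⁻¹
    apply Measurable.inv
    apply Measurable.sub measurable_const
    exact ((Complex.measurable_ofReal.comp (hb j hj)).pow_const 2).mul
      (ih (j+1) (by omega))

lemma TT_diff_le (z : ℂ) (hv : 0 < z.im) (b : ℕ → Ω → ℝ) : ∀ (n j : ℕ) (ω : Ω),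
    ‖TT z b j (n+1) ω - TT z b j n ω‖
      ≤ (2 / z.im) * ∏ i ∈ Finset.range n, ((b (j + i) ω)^2 / z.im^2) := by
  intro n
  induction n with
  | zero =>
    intro j ω
    simp only [Finset.range_zero, Finset.prod_empty, mul_one]
    exact diam_bound (TT_mem z hv b 1 j ω) (TT_mem z hv b 0 j ω)
  | succ n ih =>
    intro j ω
    have step : ‖TT z b j (n+2) ω - TT z b j (n+1) ω‖
        ≤ (b j ω)^2 / z.im^2 * ‖TT z b (j+1) (n+1) ω - TT z b (j+1) n ω‖ := by
      exact F_lip hv (b j ω) (TT_mem z hv b (n+1) (j+1) ω) (TT_mem z hv b n (j+1) ω)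
    calc ‖TT z b j (n+2) ω - TT z b j (n+1) ω‖
        ≤ (b j ω)^2 / z.im^2 * ‖TT z b (j+1) (n+1) ω - TT z b (j+1) n ω‖ := step
      _ ≤ (b j ω)^2 / z.im^2 * ((2 / z.im) * ∏ i ∈ Finset.range n, ((b ((j+1) + i) ω)^2 / z.im^2)) := by
          apply mul_le_mul_of_nonneg_left (ih (j+1) ω) (by positivity)
      _ = (2 / z.im) * ∏ i ∈ Finset.range (n+1), ((b (j + i) ω)^2 / z.im^2) := by
          rw [Finset.prod_range_succ']
          have : ∀ i, (j + 1) + i = j + (i + 1) := by omega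
          simp only [this, Nat.add_zero]
          ring





lemma s_eq_gfun (z : ℂ) (b : ℕ → Ω → ℝ) (s : ℕ → Ω → ℂ)
    (hs1 : s 1 = fun _ => 1 / z)
    (hsrec : ∀ i, 1 ≤ i → s (i + 1) = fun ω => (z - ((b i ω : ℂ)) ^ 2 * s i ω)⁻¹) :
    ∀ n ω, s (n+1) ω = gfun z n (fun i => b (n - (i : ℕ)) ω) := by
  intro n
  induction n with
  | zero => intro ω; rw [hs1]; rfl
  | succ n ih =>
    intro ω
    rw [hsrec (n+1) (by omega)]
    show (z - ((b (n+1) ω : ℂ))^2 * s (n+1) ω)⁻¹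
      = (z - ((b ((n+1) - ((0 : Fin (n+2)) : ℕ)) ω : ℂ))^2
          * gfun z n (fun i => b ((n+1) - ((Fin.succ i : Fin (n+1)) : ℕ)) ω))⁻¹
    have h0 : (n+1) - ((0 : Fin (n+2)) : ℕ) = n + 1 := by simp
    have h1 : (fun i : Fin n => b ((n+1) - ((Fin.succ i : Fin (n+1)) : ℕ)) ω)
        = fun i : Fin n => b (n - (i : ℕ)) ω := by
      funext i
      have : (n+1) - ((Fin.succ i : Fin (n+1)) : ℕ) = n - (i : ℕ) := by
        rw [Fin.val_succ]; omega
      rw [this]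
    rw [h0, h1, ih ω]

section Prob
variable [MeasureSpace Ω] [IsProbabilityMeasure (ℙ : Measure Ω)]




lemma map_tuple_eq_pi (b : ℕ → Ω → ℝ) (hmeas : ∀ i, Measurable (b i))
    (hindep : iIndepFun b ℙ)
    (hident : ∀ i j, Measure.map (b i) ℙ = Measure.map (b j) ℙ)
    (n : ℕ) (σ : Fin n → ℕ) (hσ : Function.Injective σ) :
    Measure.map (fun ω (i : Fin n) => b (σ i) ω) ℙ
      = Measure.pi (fun _ : Fin n => Measure.map (b 1) ℙ) := by
  classical
  have meas_tuple : Measurable (fun ω (i : Fin n) => b (σ i) ω) :=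
    measurable_pi_lambda _ fun i => hmeas _
  refine (Measure.pi_eq fun s hs => ?_).symm
  rw [Measure.map_apply meas_tuple (MeasurableSet.univ_pi hs)]
  have hpre : (fun ω (i : Fin n) => b (σ i) ω) ⁻¹' (Set.univ.pi s)
      = ⋂ i : Fin n, b (σ i) ⁻¹' s i := by
    ext ω; simp [Set.mem_pi]
  rw [hpre]
  rcases Nat.eq_zero_or_pos n with hn | hn
  · subst hn
    simp [Set.iInter_of_empty]
  · have : Nonempty (Fin n) := ⟨⟨0, hn⟩⟩
    obtain ⟨τ, hτ⟩ := hσ.hasLeftInverse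
    set SetA : ℕ → Set Ω := fun j => b j ⁻¹' s (τ j) with hSetA
    have key : ∀ i, SetA (σ i) = b (σ i) ⁻¹' s i := by
      intro i; simp [hSetA, hτ i]
    have hiInter : (⋂ i : Fin n, b (σ i) ⁻¹' s i)
        = ⋂ j ∈ Finset.image σ Finset.univ, SetA j := by
      rw [Finset.set_biInter_finset_image]
      simp only [key, Finset.mem_univ, Set.iInter_true]
    rw [hiInter]
    have hmeas' : ∀ j ∈ Finset.image σ Finset.univ,
        MeasurableSet[MeasurableSpace.comap (b j) inferInstance] (SetA j) := by
      intro j _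
      exact ⟨s (τ j), hs (τ j), rfl⟩
    rw [hindep.meas_biInter hmeas']
    rw [Finset.prod_image (fun i _ j _ h => hσ h)]
    congr 1
    funext i
    rw [key i, ← Measure.map_apply (hmeas (σ i)) (hs i), hident (σ i) 1]

lemma map_comp_tuple_eq (b : ℕ → Ω → ℝ) (hmeas : ∀ i, Measurable (b i))
    (hindep : iIndepFun b ℙ)
    (hident : ∀ i j, Measure.map (b i) ℙ = Measure.map (b j) ℙ)
    (n : ℕ) (g : (Fin n → ℝ) → ℂ) (hg : Measurable g)
    (σ τ : Fin n → ℕ) (hσ : Function.Injective σ) (hτ : Function.Injective τ) :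
    Measure.map (fun ω => g (fun i => b (σ i) ω)) ℙ
      = Measure.map (fun ω => g (fun i => b (τ i) ω)) ℙ := by
  have h1 : (fun ω => g (fun i => b (σ i) ω)) = g ∘ (fun ω (i : Fin n) => b (σ i) ω) := rfl
  have h2 : (fun ω => g (fun i => b (τ i) ω)) = g ∘ (fun ω (i : Fin n) => b (τ i) ω) := rfl
  rw [h1, h2,
    ← Measure.map_map hg (measurable_pi_lambda _ fun i => hmeas _),
    ← Measure.map_map hg (measurable_pi_lambda _ fun i => hmeas _),
    map_tuple_eq_pi b hmeas hindep hident n σ hσ,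
    map_tuple_eq_pi b hmeas hindep hident n τ hτ]

lemma sq_integrable (b : ℕ → Ω → ℝ) (hmeas : ∀ i, Measurable (b i))
    (hident : ∀ i j, Measure.map (b i) ℙ = Measure.map (b j) ℙ)
    (hL2 : Integrable (fun ω => (b 1 ω) ^ 2) ℙ) (i : ℕ) :
    Integrable (fun ω => (b i ω) ^ 2) ℙ := by
  have h1 : Integrable ((fun x : ℝ => x^2) ∘ (b 1)) ℙ := hL2
  rw [← integrable_map_measure (by fun_prop) (hmeas 1).aemeasurable] at h1
  rw [← hident i 1] at h1
  rw [integrable_map_measure (by fun_prop) (hmeas i).aemeasurable] at h1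
  exact h1

lemma sq_integral (b : ℕ → Ω → ℝ) (hmeas : ∀ i, Measurable (b i))
    (hident : ∀ i j, Measure.map (b i) ℙ = Measure.map (b j) ℙ) (i : ℕ) :
    ∫ ω, (b i ω) ^ 2 ∂ℙ = ∫ ω, (b 1 ω) ^ 2 ∂ℙ := by
  have h1 : ∫ ω, (b i ω) ^ 2 ∂ℙ = ∫ x, x^2 ∂(Measure.map (b i) ℙ) :=
    (integral_map (hmeas i).aemeasurable ((continuous_pow 2).measurable.aestronglyMeasurable)).symm
  rw [h1, hident i 1, integral_map (hmeas 1).aemeasurable ((continuous_pow 2).measurable.aestronglyMeasurable)]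

lemma prod_sq (b : ℕ → Ω → ℝ) (hmeas : ∀ i, Measurable (b i))
    (hindep : iIndepFun b ℙ)
    (hident : ∀ i j, Measure.map (b i) ℙ = Measure.map (b j) ℙ)
    (hL2 : Integrable (fun ω => (b 1 ω) ^ 2) ℙ) (n : ℕ) :
    Integrable (fun ω => ∏ i ∈ Finset.range n, (b (1+i) ω)^2) ℙ ∧
    ∫ ω, ∏ i ∈ Finset.range n, (b (1+i) ω)^2 ∂ℙ = (∫ ω, (b 1 ω)^2 ∂ℙ)^n := by
  classical
  set g : ℕ → Ω → ℝ := fun i ω => (b i ω)^2 with hg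
  have hgmeas : ∀ i, Measurable (g i) := fun i => (hmeas i).pow_const 2
  have hgindep : iIndepFun g ℙ :=
    hindep.comp (fun _ x => x^2) (fun _ => measurable_id.pow_const 2)
  induction n with
  | zero => simp
  | succ n ih =>
    have hS : ∀ ω, ∏ i ∈ Finset.range (n+1), (b (1+i) ω)^2
        = (∏ i ∈ Finset.range n, (b (1+i) ω)^2) * (b (1+n) ω)^2 := by
      intro ω; rw [Finset.prod_range_succ]
    have hinj : Function.Injective (fun i : ℕ => 1 + i) := add_right_injective 1
    have hfun : (∏ i ∈ Finset.image (fun i => 1 + i) (Finset.range n), g i)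
        = fun ω => ∏ i ∈ Finset.range n, (b (1+i) ω)^2 := by
      funext ω
      rw [Finset.prod_apply, Finset.prod_image (fun a _ c _ h => hinj h)]
    have hnotmem : 1 + n ∉ Finset.image (fun i => 1 + i) (Finset.range n) := by
      simp only [Finset.mem_image, Finset.mem_range]
      rintro ⟨i, hi, h⟩; omega
    have hindep2 : IndepFun (fun ω => ∏ i ∈ Finset.range n, (b (1+i) ω)^2) (g (1+n)) ℙ := by
      rw [← hfun]
      exact hgindep.indepFun_finset_prod_of_notMem hgmeas hnotmem
    have hint_gn : Integrable (g (1+n)) ℙ := sq_integrable b hmeas hident hL2 (1+n)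
    have hmul : Integrable ((fun ω => ∏ i ∈ Finset.range n, (b (1+i) ω)^2) * g (1+n)) ℙ :=
      hindep2.integrable_mul ih.1 hint_gn
    constructor
    · simpa only [hS, Pi.mul_def, hg] using hmul
    · have := hindep2.integral_mul_eq_mul_integral ih.1.aestronglyMeasurable hint_gn.aestronglyMeasurable
      calc ∫ ω, ∏ i ∈ Finset.range (n+1), (b (1+i) ω)^2 ∂ℙ
          = ∫ ω, (∏ i ∈ Finset.range n, (b (1+i) ω)^2) * (b (1+n) ω)^2 ∂ℙ := by
            simp_rw [hS]
        _ = (∫ ω, ∏ i ∈ Finset.range n, (b (1+i) ω)^2 ∂ℙ) * ∫ ω, (b (1+n) ω)^2 ∂ℙ := this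
        _ = (∫ ω, (b 1 ω)^2 ∂ℙ)^n * ∫ ω, (b 1 ω)^2 ∂ℙ := by
            rw [ih.2, sq_integral b hmeas hident (1+n)]
        _ = (∫ ω, (b 1 ω)^2 ∂ℙ)^(n+1) := by ring


end Prob
end TridiagAux



/-- Wasserstein-1 distance on `ℂ` via the Kantorovich–Rubinstein dual formulation. -/
noncomputable def W1 (μ ν : Measure ℂ) : ℝ :=
  ⨆ f : { f : ℂ → ℝ // LipschitzWith 1 f }, |(∫ x, f.1 x ∂μ) - ∫ x, f.1 x ∂ν|

open TridiagAux

instance : Nonempty { f : ℂ → ℝ // LipschitzWith 1 f } :=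
  ⟨⟨fun _ => 0, (LipschitzWith.const 0).weaken (by norm_num)⟩⟩

theorem tridiag_corner_resolvent_converges
    {Ω : Type*} [MeasureSpace Ω] [IsProbabilityMeasure (ℙ : Measure Ω)]
    (b : ℕ → Ω → ℝ) (hmeas : ∀ i, Measurable (b i))
    (hindep : iIndepFun b ℙ)
    (hident : ∀ i j, Measure.map (b i) ℙ = Measure.map (b j) ℙ)
    (hL2 : Integrable (fun ω => (b 1 ω) ^ 2) ℙ)
    (z : ℂ) (hz : (∫ ω, (b 1 ω) ^ 2 ∂ℙ) < z.im)
    (hz' : (∫ ω, (b 1 ω) ^ 2 ∂ℙ) / z.im ^ 2 < 1)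
    (s : ℕ → Ω → ℂ) (hs1 : s 1 = fun _ => 1 / z)
    (hsrec : ∀ i, 1 ≤ i → s (i + 1) = fun ω => (z - ((b i ω : ℂ)) ^ 2 * s i ω)⁻¹) :
    -- the laws of the `s i` form a Cauchy sequence for the Wasserstein-1 distance
    (∀ ε > (0 : ℝ), ∃ N, ∀ m, N ≤ m → ∀ n, N ≤ n →
        W1 (Measure.map (s m) ℙ) (Measure.map (s n) ℙ) < ε) ∧
    -- and converge in distribution to a fixed point of the distributional equation
    ∃ (Ω' : Type) (_ : MeasureSpace Ω') (_ : IsProbabilityMeasure (ℙ : Measure Ω'))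
      (S : Ω' → ℂ) (b' : Ω' → ℝ),
        Measurable S ∧ Measurable b' ∧
        Measure.map b' ℙ = Measure.map (b 1) ℙ ∧
        IndepFun b' S ℙ ∧
        (∀ᵐ ω' ∂(ℙ : Measure Ω'), (S ω').im ≤ 0 ∧ ‖S ω'‖ ≤ 1 / z.im) ∧
        Measure.map (fun ω' => (z - ((b' ω' : ℂ)) ^ 2 * S ω')⁻¹) ℙ = Measure.map S ℙ ∧
        ∀ f : ℂ → ℝ, Continuous f → (∃ C, ∀ x, |f x| ≤ C) →
          Tendsto (fun n => ∫ ω, f (s n ω) ∂ℙ) atTop (nhds (∫ ω', f (S ω') ∂ℙ)) := by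
    classical
  set B : ℝ := ∫ ω, (b 1 ω) ^ 2 ∂ℙ with hB_def
  have hB0 : 0 ≤ B := integral_nonneg fun ω => sq_nonneg _
  have hv : 0 < z.im := lt_of_le_of_lt hB0 hz
  set q : ℝ := B / z.im ^ 2 with hq_def
  have hq0 : 0 ≤ q := div_nonneg hB0 (by positivity)
  have hq1 : q < 1 := hz'
  set TT1 : ℕ → Ω → ℂ := fun n => TT z b 1 n with hTT1_def
  have hTmem : ∀ n ω, TT1 n ω ∈ Dset z := fun n ω => TT_mem z hv b n 1 ω
  have hTmeas : ∀ n, Measurable (TT1 n) :=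
    fun n => TT_measurable z b (fun j _ => hmeas j) n 1 le_rfl
  have habs_comm : ∀ x y : ℂ, ‖x - y‖ = ‖y - x‖ := fun x y => by
    rw [← Complex.dist_eq, dist_comm, Complex.dist_eq]
  -- the dominating product functions
  set h : ℕ → Ω → ℝ := fun n ω => (2 / z.im) * ∏ i ∈ Finset.range n, ((b (1 + i) ω)^2 / z.im^2)
    with hh_def
  have hh_nonneg : ∀ n ω, 0 ≤ h n ω := by
    intro n ω
    apply mul_nonneg (by positivity)
    exact Finset.prod_nonneg fun i _ => by positivity
  have hh_eq : ∀ n ω, h n ω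
      = (2 / z.im) * ((∏ i ∈ Finset.range n, (b (1 + i) ω)^2) / (z.im^2)^n) := by
    intro n ω
    simp only [hh_def]
    rw [Finset.prod_div_distrib, Finset.prod_const, Finset.card_range]
  have hh_meas : ∀ n, Measurable (h n) := by
    intro n
    apply Measurable.const_mul
    exact Finset.measurable_prod _ fun i _ => ((hmeas (1+i)).pow_const 2).div_const _
  have hh_int : ∀ n, Integrable (h n) ℙ := by
    intro n
    have := (prod_sq b hmeas hindep hident hL2 n).1
    have h2 : Integrable (fun ω => (2 / z.im) *
        ((∏ i ∈ Finset.range n, (b (1 + i) ω)^2) / (z.im^2)^n)) ℙ :=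
      (this.div_const _).const_mul _
    exact h2.congr (ae_of_all _ fun ω => (hh_eq n ω).symm)
  have hh_integral : ∀ n, ∫ ω, h n ω ∂ℙ = (2 / z.im) * q ^ n := by
    intro n
    have h1 : ∫ ω, h n ω ∂ℙ = ∫ ω, (2 / z.im) *
        ((∏ i ∈ Finset.range n, (b (1 + i) ω)^2) / (z.im^2)^n) ∂ℙ :=
      integral_congr_ae (ae_of_all _ fun ω => hh_eq n ω)
    rw [h1, integral_const_mul, integral_div, (prod_sq b hmeas hindep hident hL2 n).2]
    rw [hq_def, div_pow]
  have hdiff : ∀ n ω, ‖TT1 (n+1) ω - TT1 n ω‖ ≤ h n ω :=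
    fun n ω => TT_diff_le z hv b n 1 ω
  -- integrability of differences
  have habs_int : ∀ m n, Integrable (fun ω => ‖TT1 m ω - TT1 n ω‖) ℙ := by
    intro m n
    apply Integrable.mono' (integrable_const (2 / z.im))
    · exact ((((hTmeas m).sub (hTmeas n)).norm).aestronglyMeasurable)
    · refine ae_of_all _ fun ω => ?_
      rw [Real.norm_eq_abs, abs_of_nonneg (norm_nonneg _)]
      exact diam_bound (hTmem m ω) (hTmem n ω)
  have hEdelta : ∀ n, ∫ ω, ‖TT1 (n+1) ω - TT1 n ω‖ ∂ℙ ≤ (2 / z.im) * q ^ n := by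
    intro n
    rw [← hh_integral n]
    exact integral_mono (habs_int (n+1) n) (hh_int n) fun ω => hdiff n ω
  -- geometric tail bound
  have hgeom_sum : ∀ K k : ℕ, ∑ i ∈ Finset.range k, (2 / z.im) * q ^ (K + i)
      ≤ (2 / z.im) * (1 - q)⁻¹ * q ^ K := by
    intro K k
    have h1 : ∀ i, (2 / z.im) * q ^ (K + i) = ((2 / z.im) * q ^ K) * q ^ i := by
      intro i; rw [pow_add]; ring
    simp_rw [h1]
    rw [← Finset.mul_sum]
    have h2 : ∑ i ∈ Finset.range k, q ^ i ≤ (1 - q)⁻¹ := by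
      have := Summable.sum_le_tsum (Finset.range k) (fun i _ => pow_nonneg hq0 i)
        (summable_geometric_of_lt_one hq0 hq1)
      rwa [tsum_geometric_of_lt_one hq0 hq1] at this
    calc (2 / z.im) * q ^ K * ∑ i ∈ Finset.range k, q ^ i
        ≤ (2 / z.im) * q ^ K * (1 - q)⁻¹ := by
          apply mul_le_mul_of_nonneg_left h2 (by positivity)
      _ = (2 / z.im) * (1 - q)⁻¹ * q ^ K := by ring
  have hEtail : ∀ K k : ℕ, ∫ ω, ‖TT1 (K + k) ω - TT1 K ω‖ ∂ℙ
      ≤ (2 / z.im) * (1 - q)⁻¹ * q ^ K := by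
    intro K k
    have hptwise : ∀ ω, ‖TT1 (K + k) ω - TT1 K ω‖
        ≤ ∑ i ∈ Finset.range k, ‖TT1 (K + i + 1) ω - TT1 (K + i) ω‖ := by
      intro ω
      have := dist_le_range_sum_dist (fun i => TT1 (K + i) ω) k
      simp only [Complex.dist_eq] at this
      calc ‖TT1 (K + k) ω - TT1 K ω‖
          = ‖TT1 (K + 0) ω - TT1 (K + k) ω‖ := by
            rw [Nat.add_zero, habs_comm]
        _ ≤ ∑ i ∈ Finset.range k, ‖TT1 (K + i) ω - TT1 (K + (i+1)) ω‖ := this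
        _ = ∑ i ∈ Finset.range k, ‖TT1 (K + i + 1) ω - TT1 (K + i) ω‖ := by
            apply Finset.sum_congr rfl
            intro i _
            rw [habs_comm]
            rfl
    calc ∫ ω, ‖TT1 (K + k) ω - TT1 K ω‖ ∂ℙ
        ≤ ∫ ω, ∑ i ∈ Finset.range k, ‖TT1 (K + i + 1) ω - TT1 (K + i) ω‖ ∂ℙ := by
          apply integral_mono (habs_int (K+k) K) _ hptwise
          exact integrable_finset_sum _ fun i _ => habs_int (K+i+1) (K+i)
      _ = ∑ i ∈ Finset.range k, ∫ ω, ‖TT1 (K + i + 1) ω - TT1 (K + i) ω‖ ∂ℙ :=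
          integral_finset_sum _ fun i _ => habs_int (K+i+1) (K+i)
      _ ≤ ∑ i ∈ Finset.range k, (2 / z.im) * q ^ (K + i) :=
          Finset.sum_le_sum fun i _ => hEdelta (K + i)
      _ ≤ (2 / z.im) * (1 - q)⁻¹ * q ^ K := hgeom_sum K k
  have hE2 : ∀ a c : ℕ, ∫ ω, ‖TT1 a ω - TT1 c ω‖ ∂ℙ
      ≤ (2 / z.im) * (1 - q)⁻¹ * q ^ (min a c) := by
    intro a c
    rcases le_total a c with hac | hac
    · obtain ⟨k, rfl⟩ : ∃ k, c = a + k := ⟨c - a, by omega⟩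
      have h1 : ∀ ω, ‖TT1 a ω - TT1 (a + k) ω‖
          = ‖TT1 (a + k) ω - TT1 a ω‖ := fun ω => habs_comm _ _
      rw [min_eq_left hac]
      calc ∫ ω, ‖TT1 a ω - TT1 (a+k) ω‖ ∂ℙ
          = ∫ ω, ‖TT1 (a+k) ω - TT1 a ω‖ ∂ℙ :=
            integral_congr_ae (ae_of_all _ h1)
        _ ≤ _ := hEtail a k
    · obtain ⟨k, rfl⟩ : ∃ k, a = c + k := ⟨a - c, by omega⟩
      rw [min_eq_right hac]
      exact hEtail c k
  -- laws of `s` equal laws of the reversed iteration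
  have hsg : ∀ n ω, s (n+1) ω = gfun z n (fun i => b (n - (i : ℕ)) ω) :=
    s_eq_gfun z b s hs1 hsrec
  have hsmeas : ∀ n, Measurable (s (n+1)) := by
    intro n
    have : s (n+1) = fun ω => gfun z n (fun i => b (n - (i : ℕ)) ω) := funext (hsg n)
    rw [this]
    exact (gfun_measurable z n).comp (measurable_pi_lambda _ fun i => hmeas _)
  have hlaw : ∀ n, Measure.map (s (n+1)) ℙ = Measure.map (TT1 n) ℙ := by
    intro n
    have h1 : s (n+1) = fun ω => gfun z n (fun i => b (n - (i : ℕ)) ω) := funext (hsg n)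
    have h2 : TT1 n = fun ω => gfun z n (fun i => b (1 + (i : ℕ)) ω) := by
      funext ω; exact TT_eq_gfun z b n 1 ω
    rw [h1, h2]
    apply map_comp_tuple_eq b hmeas hindep hident n _ (gfun_measurable z n)
    · intro i j hij
      simp only at hij
      have hi := i.isLt; have hj := j.isLt
      exact Fin.ext (by omega)
    · intro i j hij
      simp only at hij
      exact Fin.ext (by omega)
  -- shifted law equality
  have hlaw2 : ∀ n, Measure.map (fun ω => (z - ((b 0 ω : ℂ))^2 * TT1 n ω)⁻¹) ℙ
      = Measure.map (TT1 (n+1)) ℙ := by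
    intro n
    have h1 : (fun ω => (z - ((b 0 ω : ℂ))^2 * TT1 n ω)⁻¹)
        = fun ω => gfun z (n+1) (fun i => b ((i : ℕ)) ω) := by
      funext ω
      show _ = (z - ((b ((0 : Fin (n+1+1)) : ℕ) ω : ℂ))^2
          * gfun z n (fun i => b ((Fin.succ i : Fin (n+1)) : ℕ) ω))⁻¹
      have h0 : ((0 : Fin (n+1+1)) : ℕ) = 0 := rfl
      have hsucc : (fun i : Fin n => b ((Fin.succ i : Fin (n+1)) : ℕ) ω)
          = fun i : Fin n => b (1 + (i : ℕ)) ω := by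
        funext i
        have : ((Fin.succ i : Fin (n+1)) : ℕ) = 1 + (i : ℕ) := by rw [Fin.val_succ]; omega
        rw [this]
      rw [h0, hsucc, ← TT_eq_gfun z b n 1 ω]
    have h2 : TT1 (n+1) = fun ω => gfun z (n+1) (fun i => b (1 + (i : ℕ)) ω) := by
      funext ω; exact TT_eq_gfun z b (n+1) 1 ω
    rw [h1, h2]
    apply map_comp_tuple_eq b hmeas hindep hident (n+1) _ (gfun_measurable z (n+1))
    · exact fun i j hij => Fin.ext (by exact hij)
    · intro i j hij
      simp only at hij
      exact Fin.ext (by omega)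
  -- Wasserstein distance bounded by coupling
  have hW1le : ∀ X Y : Ω → ℂ, Measurable X → Measurable Y →
      (∀ ω, X ω ∈ Dset z) → (∀ ω, Y ω ∈ Dset z) →
      W1 (Measure.map X ℙ) (Measure.map Y ℙ) ≤ ∫ ω, ‖X ω - Y ω‖ ∂ℙ := by
    intro X Y hX hY hXD hYD
    apply ciSup_le
    intro f
    have hfX : Integrable (fun ω => f.1 (X ω)) ℙ := by
      apply Integrable.mono' (integrable_const (|f.1 0| + 1 / z.im))
      · exact (f.2.continuous.measurable.comp hX).aestronglyMeasurable
      · refine ae_of_all _ fun ω => ?_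
        rw [Real.norm_eq_abs]
        have h1 : |f.1 (X ω) - f.1 0| ≤ ‖X ω - 0‖ := by
          have := f.2.dist_le_mul (X ω) 0
          rwa [Real.dist_eq, Complex.dist_eq, NNReal.coe_one, one_mul] at this
        have h2 : ‖X ω - 0‖ ≤ 1 / z.im := by
          rw [sub_zero]; exact (hXD ω).2
        calc |f.1 (X ω)| = |f.1 0 + (f.1 (X ω) - f.1 0)| := by ring_nf
          _ ≤ |f.1 0| + |f.1 (X ω) - f.1 0| := abs_add_le _ _
          _ ≤ |f.1 0| + 1 / z.im := by linarith
    have hfY : Integrable (fun ω => f.1 (Y ω)) ℙ := by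
      apply Integrable.mono' (integrable_const (|f.1 0| + 1 / z.im))
      · exact (f.2.continuous.measurable.comp hY).aestronglyMeasurable
      · refine ae_of_all _ fun ω => ?_
        rw [Real.norm_eq_abs]
        have h1 : |f.1 (Y ω) - f.1 0| ≤ ‖Y ω - 0‖ := by
          have := f.2.dist_le_mul (Y ω) 0
          rwa [Real.dist_eq, Complex.dist_eq, NNReal.coe_one, one_mul] at this
        have h2 : ‖Y ω - 0‖ ≤ 1 / z.im := by
          rw [sub_zero]; exact (hYD ω).2
        calc |f.1 (Y ω)| = |f.1 0 + (f.1 (Y ω) - f.1 0)| := by ring_nf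
          _ ≤ |f.1 0| + |f.1 (Y ω) - f.1 0| := abs_add_le _ _
          _ ≤ |f.1 0| + 1 / z.im := by linarith
    rw [integral_map hX.aemeasurable f.2.continuous.aestronglyMeasurable,
      integral_map hY.aemeasurable f.2.continuous.aestronglyMeasurable]
    rw [← integral_sub hfX hfY]
    have habs_int' : Integrable (fun ω => ‖X ω - Y ω‖) ℙ := by
      apply Integrable.mono' (integrable_const (2 / z.im))
      · exact ((hX.sub hY).norm).aestronglyMeasurable
      · refine ae_of_all _ fun ω => ?_
        rw [Real.norm_eq_abs, abs_of_nonneg (norm_nonneg _)]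
        exact diam_bound (hXD ω) (hYD ω)
    calc |∫ ω, (f.1 (X ω) - f.1 (Y ω)) ∂ℙ|
        ≤ ∫ ω, |f.1 (X ω) - f.1 (Y ω)| ∂ℙ := by
          have := norm_integral_le_integral_norm (μ := (ℙ : Measure Ω))
            (f := fun ω => f.1 (X ω) - f.1 (Y ω))
          simpa [Real.norm_eq_abs] using this
      _ ≤ ∫ ω, ‖X ω - Y ω‖ ∂ℙ := by
          apply integral_mono (hfX.sub hfY).abs habs_int'
          intro ω
          have := f.2.dist_le_mul (X ω) (Y ω)
          rwa [Real.dist_eq, Complex.dist_eq, NNReal.coe_one, one_mul] at this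
  -- Part 1 : Cauchy for W1
  have part1 : ∀ ε > (0 : ℝ), ∃ N, ∀ m, N ≤ m → ∀ n, N ≤ n →
      W1 (Measure.map (s m) ℙ) (Measure.map (s n) ℙ) < ε := by
    intro ε hε
    set C : ℝ := (2 / z.im) * (1 - q)⁻¹ with hC_def
    have hC0 : 0 ≤ C := by
      apply mul_nonneg (by positivity)
      rw [inv_nonneg]; linarith
    have htend : Tendsto (fun n => C * q ^ n) atTop (nhds 0) := by
      have := (tendsto_pow_atTop_nhds_zero_of_lt_one hq0 hq1).const_mul C
      simpa using this
    obtain ⟨N₀, hN₀⟩ := (htend.eventually (gt_mem_nhds hε)).exists_forall_of_atTop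
    refine ⟨N₀ + 1, ?_⟩
    intro m hm n hn
    obtain ⟨m', rfl⟩ : ∃ m', m = m' + 1 := ⟨m - 1, by omega⟩
    obtain ⟨n', rfl⟩ : ∃ n', n = n' + 1 := ⟨n - 1, by omega⟩
    rw [hlaw m', hlaw n']
    calc W1 (Measure.map (TT1 m') ℙ) (Measure.map (TT1 n') ℙ)
        ≤ ∫ ω, ‖TT1 m' ω - TT1 n' ω‖ ∂ℙ :=
          hW1le _ _ (hTmeas m') (hTmeas n') (hTmem m') (hTmem n')
      _ ≤ C * q ^ (min m' n') := hE2 m' n'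
      _ ≤ C * q ^ N₀ := by
          apply mul_le_mul_of_nonneg_left _ hC0
          apply pow_le_pow_of_le_one hq0 hq1.le
          omega
      _ < ε := hN₀ N₀ le_rfl
  -- Part 2 : construction of the limit
  -- almost-sure convergence of the reversed iteration
  set A : Set Ω := {ω | ∃ c, Tendsto (fun n => TT1 n ω) atTop (nhds c)} with hA_def
  have hAfull : ∀ᵐ ω ∂(ℙ : Measure Ω), ω ∈ A := by
    have hsum : ∀ᵐ ω ∂(ℙ : Measure Ω), Summable fun n => h n ω := by
      have hmeas_tsum : Measurable fun ω => ∑' n, ENNReal.ofReal (h n ω) :=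
        Measurable.ennreal_tsum fun n => (hh_meas n).ennreal_ofReal
      have hlt : ∫⁻ ω, ∑' n, ENNReal.ofReal (h n ω) ∂ℙ ≠ ⊤ := by
        rw [lintegral_tsum fun n => ((hh_meas n).ennreal_ofReal).aemeasurable]
        have heq : ∀ n, ∫⁻ ω, ENNReal.ofReal (h n ω) ∂ℙ
            = ENNReal.ofReal ((2 / z.im) * q ^ n) := by
          intro n
          rw [← ofReal_integral_eq_lintegral_ofReal (hh_int n)
            (ae_of_all _ fun ω => hh_nonneg n ω), hh_integral n]
        simp_rw [heq]
        rw [← ENNReal.ofReal_tsum_of_nonneg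
          (fun n => by positivity)
          ((summable_geometric_of_lt_one hq0 hq1).mul_left _)]
        exact ENNReal.ofReal_ne_top
      filter_upwards [ae_lt_top hmeas_tsum hlt] with ω hω
      have := ENNReal.summable_toReal hω.ne
      refine this.congr fun n => ?_
      rw [ENNReal.toReal_ofReal (hh_nonneg n ω)]
    filter_upwards [hsum] with ω hω
    have hsum2 : Summable fun n => dist (TT1 n ω) (TT1 (n+1) ω) := by
      apply Summable.of_nonneg_of_le (fun n => dist_nonneg) _ hω
      intro n
      rw [Complex.dist_eq, habs_comm]
      exact hdiff n ω
    exact cauchySeq_tendsto_of_complete (cauchySeq_of_summable_dist hsum2)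
  have hconv : ∀ ω, ∃ c,
      Tendsto (fun n => if ω ∈ A then TT1 n ω else 1 / z) atTop (nhds c) := by
    intro ω
    by_cases hA : ω ∈ A
    · obtain ⟨c, hc⟩ := id hA
      exact ⟨c, by simp only [if_pos hA]; exact hc⟩
    · exact ⟨1 / z, by simp only [if_neg hA]; exact tendsto_const_nhds⟩
  set S0 : Ω → ℂ := fun ω => (hconv ω).choose with hS0_def
  have hS0tend : ∀ ω,
      Tendsto (fun n => if ω ∈ A then TT1 n ω else 1 / z) atTop (nhds (S0 ω)) :=
    fun ω => (hconv ω).choose_spec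
  -- measurability w.r.t. any σ-algebra making the `b j`, `j ≥ 1`, measurable
  have hS0meas_gen : ∀ m' : MeasurableSpace Ω,
      (∀ j, 1 ≤ j → Measurable[m'] (b j)) → Measurable[m'] S0 := by
    intro m' hb
    letI : MeasurableSpace Ω := m'
    have hT : ∀ n, Measurable[m'] (TT1 n) :=
      fun n => TT_measurable z b hb n 1 le_rfl
    have hA' : MeasurableSet[m'] A := measurableSet_exists_tendsto hT
    have ht' : ∀ n, Measurable[m'] fun ω => if ω ∈ A then TT1 n ω else 1 / z :=
      fun n => Measurable.ite hA' (hT n) measurable_const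
    exact measurable_of_tendsto_metrizable ht' (tendsto_pi_nhds.2 hS0tend)
  have hS0meas : Measurable S0 := hS0meas_gen _ fun j _ => hmeas j
  have hS0mem : ∀ ω, S0 ω ∈ Dset z := by
    intro ω
    apply (isClosed_Dset z).mem_of_tendsto (hS0tend ω)
    refine Filter.Eventually.of_forall fun n => ?_
    by_cases hA : ω ∈ A
    · rw [if_pos hA]; exact hTmem n ω
    · rw [if_neg hA]; exact one_div_z_mem hv
  have hS0ae : ∀ᵐ ω ∂(ℙ : Measure Ω), Tendsto (fun n => TT1 n ω) atTop (nhds (S0 ω)) := by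
    filter_upwards [hAfull] with ω hA
    have := hS0tend ω
    simpa only [if_pos hA] using this
  -- independence of `b 0` and `S0`
  have hIndepFun0 : IndepFun (b 0) S0 ℙ := by
    have hindep' := indep_biSup_compl (fun n => (hmeas n).comap_le)
      ((iIndepFun_iff_iIndep _ _ _).1 hindep) {0}
    have h0 : (⨆ j ∈ ({0} : Set ℕ), MeasurableSpace.comap (b j) inferInstance)
        = MeasurableSpace.comap (b 0) inferInstance := by simp
    rw [h0] at hindep'
    have hble : ∀ j, 1 ≤ j →
        Measurable[⨆ n ∈ ({0}ᶜ : Set ℕ), MeasurableSpace.comap (b n) inferInstance] (b j) := by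
      intro j hj
      apply Measurable.of_comap_le
      exact le_biSup (fun n => MeasurableSpace.comap (b n) inferInstance)
        (show j ∈ ({0}ᶜ : Set ℕ) by simp; omega)
    have hS0m' := hS0meas_gen _ hble
    rw [IndepFun_iff_Indep]
    exact indep_of_indep_of_le_right hindep' hS0m'.comap_le
  -- the target measures
  set μb : Measure ℝ := Measure.map (b 1) ℙ with hμb_def
  set ν : Measure ℂ := Measure.map S0 ℙ with hν_def
  haveI : IsProbabilityMeasure μb := Measure.isProbabilityMeasure_map (hmeas 1).aemeasurable
  haveI : IsProbabilityMeasure ν := Measure.isProbabilityMeasure_map hS0meas.aemeasurable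
  -- convergence of lintegrals of bounded continuous functions
  have hfbound : ∀ f : BoundedContinuousFunction ℂ NNReal, ∃ Cb : ENNReal,
      (∀ x : ℂ, (f x : ENNReal) ≤ Cb) ∧ Cb ≠ ⊤ := by
    intro f
    obtain ⟨Cf, hCf⟩ := f.bounded
    refine ⟨ENNReal.ofReal ((f 0 : ℝ) + Cf), fun x => ?_, ENNReal.ofReal_ne_top⟩
    rw [← ENNReal.ofReal_coe_nnreal (p := f x)]
    apply ENNReal.ofReal_le_ofReal
    have h1 := hCf x 0
    rw [NNReal.dist_eq] at h1
    have h2 : |(f x : ℝ) - (f 0 : ℝ)| ≤ Cf := h1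
    have := abs_le.1 h2
    linarith [this.2]
  have hlim : ∀ f : BoundedContinuousFunction ℂ NNReal,
      Tendsto (fun n => ∫⁻ ω, (f (TT1 n ω) : ENNReal) ∂ℙ) atTop
        (nhds (∫⁻ ω, (f (S0 ω) : ENNReal) ∂ℙ)) := by
    intro f
    obtain ⟨Cb, hCb, hCbne⟩ := hfbound f
    apply tendsto_lintegral_of_dominated_convergence (fun _ => Cb)
    · exact fun n => (f.continuous.measurable.comp (hTmeas n)).coe_nnreal_ennreal
    · exact fun n => ae_of_all _ fun ω => hCb _
    · simp [lintegral_const, hCbne]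
    · filter_upwards [hS0ae] with ω hω
      exact ENNReal.tendsto_coe.2 ((f.continuous.tendsto _).comp hω)
  -- the distributional fixed-point equation on Ω
  have hfix_pre : Measure.map (fun ω => (z - ((b 0 ω : ℂ))^2 * S0 ω)⁻¹) ℙ = ν := by
    have hFmeas : Measurable fun ω => (z - ((b 0 ω : ℂ))^2 * S0 ω)⁻¹ :=
      (measurable_const.sub
        (((Complex.measurable_ofReal.comp (hmeas 0)).pow_const 2).mul hS0meas)).inv
    apply ext_of_forall_lintegral_eq_of_IsFiniteMeasure
    intro f
    rw [hν_def,
      lintegral_map f.continuous.measurable.coe_nnreal_ennreal hFmeas,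
      lintegral_map f.continuous.measurable.coe_nnreal_ennreal hS0meas]
    have hleft : Tendsto (fun n => ∫⁻ ω, (f ((z - ((b 0 ω : ℂ))^2 * TT1 n ω)⁻¹) : ENNReal) ∂ℙ)
        atTop (nhds (∫⁻ ω, (f ((z - ((b 0 ω : ℂ))^2 * S0 ω)⁻¹) : ENNReal) ∂ℙ)) := by
      obtain ⟨Cb, hCb, hCbne⟩ := hfbound f
      apply tendsto_lintegral_of_dominated_convergence (fun _ => Cb)
      · intro n
        exact (f.continuous.measurable.comp
          ((measurable_const.sub
            (((Complex.measurable_ofReal.comp (hmeas 0)).pow_const 2).mul (hTmeas n))).inv)).coe_nnreal_ennreal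
      · exact fun n => ae_of_all _ fun ω => hCb _
      · simp [lintegral_const, hCbne]
      · filter_upwards [hS0ae] with ω hω
        apply ENNReal.tendsto_coe.2
        apply (f.continuous.tendsto _).comp
        apply Filter.Tendsto.inv₀
        · exact tendsto_const_nhds.sub (tendsto_const_nhds.mul hω)
        · exact sub_ne_zero' hv (b 0 ω) (hS0mem ω)
    have hstep : ∀ n, ∫⁻ ω, (f ((z - ((b 0 ω : ℂ))^2 * TT1 n ω)⁻¹) : ENNReal) ∂ℙ
        = ∫⁻ ω, (f (TT1 (n+1) ω) : ENNReal) ∂ℙ := by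
      intro n
      have hFn : Measurable fun ω => (z - ((b 0 ω : ℂ))^2 * TT1 n ω)⁻¹ :=
        (measurable_const.sub
          (((Complex.measurable_ofReal.comp (hmeas 0)).pow_const 2).mul (hTmeas n))).inv
      rw [← lintegral_map f.continuous.measurable.coe_nnreal_ennreal hFn,
        ← lintegral_map f.continuous.measurable.coe_nnreal_ennreal
          (hTmeas (n+1)),
        hlaw2 n]
    have hright : Tendsto (fun n => ∫⁻ ω, (f (TT1 (n+1) ω) : ENNReal) ∂ℙ)
        atTop (nhds (∫⁻ ω, (f (S0 ω) : ENNReal) ∂ℙ)) := by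
      have := hlim f
      exact (tendsto_add_atTop_iff_nat 1).2 this
    simp_rw [hstep] at hleft
    exact tendsto_nhds_unique hleft hright
  -- package everything on `ℝ × ℂ`
  refine ⟨part1, ℝ × ℂ, ⟨μb.prod ν⟩, ?_, Prod.snd, Prod.fst,
    measurable_snd, measurable_fst, ?_, ?_, ?_, ?_, ?_⟩
  · show IsProbabilityMeasure (μb.prod ν)
    infer_instance
  · show Measure.map Prod.fst (μb.prod ν) = Measure.map (b 1) ℙ
    rw [Measure.map_fst_prod]
    simp [measure_univ, hμb_def]
  · show IndepFun Prod.fst Prod.snd (μb.prod ν)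
    rw [indepFun_iff_map_prod_eq_prod_map_map measurable_fst.aemeasurable
      measurable_snd.aemeasurable]
    have h1 : (fun ω : ℝ × ℂ => (ω.1, ω.2)) = id := rfl
    rw [h1, Measure.map_id, Measure.map_fst_prod, Measure.map_snd_prod]
    simp [measure_univ]
  · show ∀ᵐ p ∂(μb.prod ν), (p.2.im ≤ 0 ∧ ‖p.2‖ ≤ 1 / z.im)
    rw [ae_iff]
    have hDmeas : MeasurableSet (Dset z) := (isClosed_Dset z).measurableSet
    have hset : {p : ℝ × ℂ | ¬(p.2.im ≤ 0 ∧ ‖p.2‖ ≤ 1 / z.im)}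
        = Set.univ ×ˢ (Dset z)ᶜ := by
      ext p; simp [Set.mem_prod, Dset]
    rw [hset, Measure.prod_prod]
    have hν0 : ν (Dset z)ᶜ = 0 := by
      rw [hν_def, Measure.map_apply hS0meas hDmeas.compl]
      have hempty : S0 ⁻¹' (Dset z)ᶜ = ∅ := by
        ext ω
        simp only [Set.mem_preimage, Set.mem_compl_iff, Set.mem_empty_iff_false, iff_false,
          not_not]
        exact hS0mem ω
      rw [hempty, measure_empty]
    rw [hν0, mul_zero]
  · show Measure.map (fun p : ℝ × ℂ => (z - ((p.1 : ℂ))^2 * p.2)⁻¹) (μb.prod ν)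
        = Measure.map Prod.snd (μb.prod ν)
    have hpair : μb.prod ν = Measure.map (fun ω => (b 0 ω, S0 ω)) ℙ := by
      rw [(indepFun_iff_map_prod_eq_prod_map_map (hmeas 0).aemeasurable
        hS0meas.aemeasurable).1 hIndepFun0, hident 0 1]
    rw [Measure.map_snd_prod]
    have hφmeas : Measurable fun p : ℝ × ℂ => (z - ((p.1 : ℂ))^2 * p.2)⁻¹ :=
      (measurable_const.sub
        (((Complex.measurable_ofReal.comp measurable_fst).pow_const 2).mul
          measurable_snd)).inv
    rw [hpair, Measure.map_map hφmeas ((hmeas 0).prodMk hS0meas)]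
    have hcomp : ((fun p : ℝ × ℂ => (z - ((p.1 : ℂ))^2 * p.2)⁻¹)
        ∘ (fun ω => (b 0 ω, S0 ω))) = fun ω => (z - ((b 0 ω : ℂ))^2 * S0 ω)⁻¹ := rfl
    rw [hcomp, hfix_pre]
    simp [measure_univ]
  · intro f hf hbdd
    obtain ⟨C, hC⟩ := hbdd
    have hint_snd : ∫ p : ℝ × ℂ, f p.2 ∂(μb.prod ν) = ∫ ω, f (S0 ω) ∂ℙ := by
      have h1 : ∫ p : ℝ × ℂ, f p.2 ∂(μb.prod ν)
          = ∫ w, f w ∂(Measure.map Prod.snd (μb.prod ν)) :=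
        (integral_map measurable_snd.aemeasurable hf.aestronglyMeasurable).symm
      rw [h1, Measure.map_snd_prod]
      simp only [measure_univ, one_smul]
      rw [hν_def, integral_map hS0meas.aemeasurable hf.aestronglyMeasurable]
    show Tendsto (fun n => ∫ ω, f (s n ω) ∂ℙ) atTop (nhds (∫ p : ℝ × ℂ, f p.2 ∂(μb.prod ν)))
    rw [hint_snd]
    rw [← tendsto_add_atTop_iff_nat 1]
    have heq : ∀ n, ∫ ω, f (s (n+1) ω) ∂ℙ = ∫ ω, f (TT1 n ω) ∂ℙ := by
      intro n
      rw [← integral_map (hsmeas n).aemeasurable hf.aestronglyMeasurable, hlaw n,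
        integral_map (hTmeas n).aemeasurable hf.aestronglyMeasurable]
    simp_rw [heq]
    apply tendsto_integral_of_dominated_convergence (fun _ => C)
    · exact fun n => (hf.measurable.comp (hTmeas n)).aestronglyMeasurable
    · exact integrable_const C
    · intro n
      refine ae_of_all _ fun ω => ?_
      rw [Real.norm_eq_abs]; exact hC _
    · filter_upwards [hS0ae] with ω hω
      exact (hf.tendsto _).comp hω
end

section
/- (Hoffman–Wielandt) Let A and B be N×N Hermitian matrices with eigenvalues λ_1^A ≤ … ≤ λ_N^A and λ_1^B ≤ … ≤ λ_N^B listed in increasing order with multiplicity. Then Σ_{i=1}^N |λ_i^A − λ_i^B|² ≤ ‖A − B‖_F², where ‖·‖_F is the Frobenius (Hilbert–Schmidt) norm. -/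
open Matrix Finset

section HWAux


-- Lemma B: weights in [0,1] summing to card of upper set are dominated by indicator of upper set
lemma lemB {N : ℕ} (g : Fin N → ℝ) (k : Fin N) (t : ℝ) (c : Fin N → ℝ)
    (hc0 : ∀ j, 0 ≤ c j) (hc1 : ∀ j, c j ≤ 1)
    (hsum : ∑ j, c j = ∑ j, (if k < j then (1:ℝ) else 0))
    (ht1 : ∀ j, k < j → t ≤ g j) (ht2 : ∀ j, ¬ k < j → g j ≤ t) :
    ∑ j, c j * g j ≤ ∑ j, (if k < j then g j else 0) := by
  have hsplit : ∑ j, c j * g j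
      = ∑ j ∈ univ.filter (fun j => k < j), c j * g j
        + ∑ j ∈ univ.filter (fun j => ¬ k < j), c j * g j :=
    (Finset.sum_filter_add_sum_filter_not _ _ _).symm
  have hsplit2 : ∑ j, c j
      = ∑ j ∈ univ.filter (fun j => k < j), c j
        + ∑ j ∈ univ.filter (fun j => ¬ k < j), c j :=
    (Finset.sum_filter_add_sum_filter_not _ _ _).symm
  have hind : ∑ j, (if k < j then g j else 0) = ∑ j ∈ univ.filter (fun j => k < j), g j :=
    (Finset.sum_filter _ _).symm
  have hone : ∑ j, (if k < j then (1:ℝ) else 0) = ∑ j ∈ univ.filter (fun j => k < j), (1:ℝ) :=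
    (Finset.sum_filter _ _).symm
  have h1 : ∑ j ∈ univ.filter (fun j => k < j), (1 - c j) * t
      ≤ ∑ j ∈ univ.filter (fun j => k < j), (1 - c j) * g j := by
    apply Finset.sum_le_sum
    intro j hj
    rw [Finset.mem_filter] at hj
    exact mul_le_mul_of_nonneg_left (ht1 j hj.2) (by linarith [hc1 j])
  have h2 : ∑ j ∈ univ.filter (fun j => ¬ k < j), c j * g j
      ≤ ∑ j ∈ univ.filter (fun j => ¬ k < j), c j * t := by
    apply Finset.sum_le_sum
    intro j hj
    rw [Finset.mem_filter] at hj
    exact mul_le_mul_of_nonneg_left (ht2 j hj.2) (hc0 j)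
  have e1 : ∑ j ∈ univ.filter (fun j => k < j), (1 - c j) * g j
      = ∑ j ∈ univ.filter (fun j => k < j), g j
        - ∑ j ∈ univ.filter (fun j => k < j), c j * g j := by
    rw [← Finset.sum_sub_distrib]; congr 1; ext j; ring
  have e2 : ∑ j ∈ univ.filter (fun j => k < j), (1 - c j) * t
      = (∑ j ∈ univ.filter (fun j => k < j), (1:ℝ)) * t
        - (∑ j ∈ univ.filter (fun j => k < j), c j) * t := by
    rw [Finset.sum_mul, Finset.sum_mul, ← Finset.sum_sub_distrib]; congr 1; ext j; ring
  have e3 : ∑ j ∈ univ.filter (fun j => ¬ k < j), c j * t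
      = (∑ j ∈ univ.filter (fun j => ¬ k < j), c j) * t := by
    rw [Finset.sum_mul]
  rw [hone] at hsum
  have e4 : (∑ j ∈ univ.filter (fun j => k < j), c j) * t
      + (∑ j ∈ univ.filter (fun j => ¬ k < j), c j) * t
      = (∑ j ∈ univ.filter (fun j => k < j), (1:ℝ)) * t := by
    rw [← add_mul, ← hsplit2, hsum]
  rw [hind]
  linarith [h1, h2]



section
variable {n : ℕ}

/-- defective successor on `Fin (n+1)` -/
def dsucc (k : Fin (n+1)) : Fin (n+1) :=
  if h : (k : ℕ) + 1 < n + 1 then ⟨(k : ℕ) + 1, h⟩ else k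

lemma le_dsucc (k : Fin (n+1)) : k ≤ dsucc k := by
  unfold dsucc; split <;> simp [Fin.le_def]

lemma lt_imp_dsucc_le (k j : Fin (n+1)) (h : k < j) : dsucc k ≤ j := by
  unfold dsucc; split
  · rw [Fin.le_def]; rw [Fin.lt_def] at h; simpa using h
  · exact le_of_lt h
  
lemma tel (f : Fin (n+1) → ℝ) (i : Fin (n+1)) :
    ∑ k, (if k < i then f (dsucc k) - f k else 0) = f i - f 0 := by
  induction i using Fin.induction with
  | zero => simp
  | succ i ih =>
    have hsplit : ∀ k : Fin (n+1),
        (if k < i.succ then f (dsucc k) - f k else 0)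
        = (if k < i.castSucc then f (dsucc k) - f k else 0)
          + (if k = i.castSucc then f (dsucc k) - f k else 0) := by
      intro k
      rcases lt_trichotomy k i.castSucc with h | h | h
      · rw [if_pos (h.trans (Fin.castSucc_lt_succ (i := i))), if_pos h, if_neg (ne_of_lt h), add_zero]
      · subst h
        rw [if_pos (Fin.castSucc_lt_succ (i := i)), if_neg (lt_irrefl _), if_pos rfl, zero_add]
      · rw [if_neg, if_neg (not_lt_of_gt h), if_neg (ne_of_gt h), add_zero]
        rw [Fin.lt_def] at h ⊢
        simp only [Fin.val_succ, Fin.coe_castSucc] at *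
        omega
    rw [Finset.sum_congr rfl (fun k _ => hsplit k), Finset.sum_add_distrib, ih,
      Finset.sum_ite_eq' univ i.castSucc]
    have hds : dsucc i.castSucc = i.succ := by
      unfold dsucc
      rw [dif_pos (by simp [Fin.is_lt] : (i.castSucc : ℕ) + 1 < n + 1)]
      ext; simp
    rw [if_pos (mem_univ _), hds]
    ring
end


section
variable {n : ℕ}
/-- expansion of a weighted bilinear sum via Abel summation in the first variable -/
lemma expand (X : Fin (n+1) → Fin (n+1) → ℝ) (f g : Fin (n+1) → ℝ)
    (hcol : ∀ j, ∑ i, X i j = 1) :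
    ∑ i, ∑ j, X i j * (f i * g j)
      = f 0 * ∑ j, g j
        + ∑ k, (f (dsucc k) - f k) * ∑ j, (∑ i, (if k < i then X i j else 0)) * g j := by
  set d : Fin (n+1) → ℝ := fun k => f (dsucc k) - f k with hd
  have per : ∀ i j, X i j * (f i * g j)
      = f 0 * (X i j * g j) + ∑ k, (if k < i then d k * (X i j * g j) else 0) := by
    intro i j
    have h1 : ∑ k, (if k < i then d k * (X i j * g j) else 0)
        = (∑ k, (if k < i then d k else 0)) * (X i j * g j) := by
      rw [Finset.sum_mul]
      exact Finset.sum_congr rfl (fun k _ => by split <;> ring)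
    rw [h1, tel f i]; ring
  calc ∑ i, ∑ j, X i j * (f i * g j)
      = ∑ i, ∑ j, (f 0 * (X i j * g j)
          + ∑ k, (if k < i then d k * (X i j * g j) else 0)) := by
        exact Finset.sum_congr rfl fun i _ => Finset.sum_congr rfl fun j _ => per i j
    _ = (∑ i, ∑ j, f 0 * (X i j * g j))
          + ∑ i, ∑ j, ∑ k, (if k < i then d k * (X i j * g j) else 0) := by
        rw [← Finset.sum_add_distrib]
        exact Finset.sum_congr rfl fun i _ => Finset.sum_add_distrib
    _ = f 0 * ∑ j, g j
          + ∑ k, d k * ∑ j, (∑ i, (if k < i then X i j else 0)) * g j := by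
        congr 1
        · rw [Finset.sum_comm, Finset.mul_sum]
          refine Finset.sum_congr rfl fun j _ => ?_
          have : ∑ i, f 0 * (X i j * g j) = f 0 * ((∑ i, X i j) * g j) := by
            rw [Finset.sum_mul, Finset.mul_sum]
          rw [this, hcol j, one_mul]
        · calc ∑ i, ∑ j, ∑ k, (if k < i then d k * (X i j * g j) else 0)
              = ∑ i, ∑ k, ∑ j, (if k < i then d k * (X i j * g j) else 0) :=
                Finset.sum_congr rfl fun i _ => Finset.sum_comm
            _ = ∑ k, ∑ i, ∑ j, (if k < i then d k * (X i j * g j) else 0) :=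
                Finset.sum_comm
            _ = ∑ k, d k * ∑ j, (∑ i, (if k < i then X i j else 0)) * g j := by
                refine Finset.sum_congr rfl fun k _ => ?_
                rw [Finset.sum_comm, Finset.mul_sum]
                refine Finset.sum_congr rfl fun j _ => ?_
                rw [Finset.sum_mul, Finset.mul_sum]
                exact Finset.sum_congr rfl fun i _ => by split <;> ring
    _ = _ := rfl

lemma key {N : ℕ} (S : Fin N → Fin N → ℝ) (f g : Fin N → ℝ)
    (hf : Monotone f) (hg : Monotone g) (hS : ∀ i j, 0 ≤ S i j)
    (hrow : ∀ i, ∑ j, S i j = 1) (hcol : ∀ j, ∑ i, S i j = 1) :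
    ∑ i, ∑ j, S i j * (f i * g j) ≤ ∑ i, f i * g i := by
  match N with
  | 0 => simp
  | n + 1 =>
    have hId : ∀ j : Fin (n+1), ∑ i, (if i = j then (1:ℝ) else 0) = 1 := by
      intro j; simp
    have hIdsum : ∑ i : Fin (n+1), ∑ j, (if i = j then (1:ℝ) else 0) * (f i * g j)
        = ∑ i, f i * g i := by
      refine Finset.sum_congr rfl fun i _ => ?_
      rw [Finset.sum_eq_single i]
      · simp
      · intro j _ hj; simp [Ne.symm hj]
      · simp
    rw [← hIdsum, expand S f g hcol, expand _ f g hId]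
    have hIdinner : ∀ k : Fin (n+1),
        ∑ j, (∑ i, (if k < i then (if i = j then (1:ℝ) else 0) else 0)) * g j
        = ∑ j, (if k < j then g j else 0) := by
      intro k
      refine Finset.sum_congr rfl fun j _ => ?_
      have : ∑ i, (if k < i then (if i = j then (1:ℝ) else 0) else 0)
          = if k < j then 1 else 0 := by
        rw [Finset.sum_eq_single j]
        · split <;> simp
        · intro i _ hi
          by_cases h : k < i <;> simp [h, hi]
        · simp
      rw [this]; split <;> simp
    have hmain : ∀ k : Fin (n+1),
        (f (dsucc k) - f k) * ∑ j, (∑ i, (if k < i then S i j else 0)) * g j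
        ≤ (f (dsucc k) - f k)
            * ∑ j, (∑ i, (if k < i then (if i = j then (1:ℝ) else 0) else 0)) * g j := by
      intro k
      rw [hIdinner k]
      have hd : 0 ≤ f (dsucc k) - f k := sub_nonneg.mpr (hf (le_dsucc k))
      refine mul_le_mul_of_nonneg_left ?_ hd
      refine lemB g k (g (dsucc k)) _ ?_ ?_ ?_ ?_ ?_
      · intro j
        exact Finset.sum_nonneg fun i _ => by split ; exacts [hS i j, le_rfl]
      · intro j
        calc ∑ i, (if k < i then S i j else 0) ≤ ∑ i, S i j :=
              Finset.sum_le_sum fun i _ => by split ; exacts [le_rfl, hS i j]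
          _ = 1 := hcol j
      · rw [Finset.sum_comm]
        calc ∑ i, ∑ j, (if k < i then S i j else 0)
            = ∑ i : Fin (n+1), (if k < i then (1:ℝ) else 0) := by
              refine Finset.sum_congr rfl fun i _ => ?_
              split
              · exact hrow i
              · exact Finset.sum_const_zero
          _ = _ := rfl
      · intro j hj; exact hg (lt_imp_dsucc_le k j hj)
      · intro j hj; exact (hg (le_of_not_gt hj)).trans (hg (le_dsucc k))
    have := Finset.sum_le_sum (fun k (_ : k ∈ univ) => hmain k)
    linarith

end

-- Frobenius norm squared as real part of trace
lemma frob_trace {N : ℕ} (M : Matrix (Fin N) (Fin N) ℂ) :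
    ∑ i, ∑ j, ‖M i j‖ ^ 2 = (Matrix.trace (Mᴴ * M)).re := by
  rw [Matrix.trace, Complex.re_sum]
  rw [Finset.sum_comm]
  refine Finset.sum_congr rfl fun j _ => ?_
  rw [Matrix.diag_apply, Matrix.mul_apply, Complex.re_sum]
  refine Finset.sum_congr rfl fun i _ => ?_
  rw [Matrix.conjTranspose_apply, Complex.sq_norm, mul_comm, Complex.star_def,
    Complex.mul_conj]
  simp

lemma frob_inv {N : ℕ} (P Q M : Matrix (Fin N) (Fin N) ℂ)
    (hP : Pᴴ * P = 1) (hQ : Qᴴ * Q = 1) :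
    ∑ i, ∑ j, ‖(P * M * Qᴴ) i j‖ ^ 2 = ∑ i, ∑ j, ‖M i j‖ ^ 2 := by
  rw [frob_trace, frob_trace]
  congr 1
  calc Matrix.trace ((P * M * Qᴴ)ᴴ * (P * M * Qᴴ))
      = Matrix.trace (Q * (Mᴴ * (Pᴴ * P) * M * Qᴴ)) := by
        simp only [conjTranspose_mul, conjTranspose_conjTranspose, Matrix.mul_assoc]
    _ = Matrix.trace (Mᴴ * (Pᴴ * P) * M * Qᴴ * Q) := Matrix.trace_mul_comm _ _
    _ = Matrix.trace (Mᴴ * M) := by rw [hP, Matrix.mul_one, Matrix.mul_assoc, hQ, Matrix.mul_one]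


/-- Hoffman–Wielandt inequality for Hermitian matrices. -/
theorem hoffman_wielandt {N : ℕ} (A B : Matrix (Fin N) (Fin N) ℂ)
    (hA : A.IsHermitian) (hB : B.IsHermitian)
    (lamA lamB : Fin N → ℝ) (hAmono : Monotone lamA) (hBmono : Monotone lamB)
    (hAperm : ∃ σ : Equiv.Perm (Fin N), lamA = hA.eigenvalues ∘ σ)
    (hBperm : ∃ σ : Equiv.Perm (Fin N), lamB = hB.eigenvalues ∘ σ) :
    (∑ i, |lamA i - lamB i| ^ 2) ≤ ∑ i, ∑ j, ‖(A - B) i j‖ ^ 2 := by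
  obtain ⟨σ, hσ⟩ := hAperm
  obtain ⟨τ, hτ⟩ := hBperm
  set α := hA.eigenvalues with hα
  set β := hB.eigenvalues with hβ
  set U : Matrix (Fin N) (Fin N) ℂ := (hA.eigenvectorUnitary : Matrix (Fin N) (Fin N) ℂ) with hU
  set V : Matrix (Fin N) (Fin N) ℂ := (hB.eigenvectorUnitary : Matrix (Fin N) (Fin N) ℂ) with hV
  have hUU : Uᴴ * U = 1 := by
    rw [← Matrix.star_eq_conjTranspose]
    exact (Matrix.mem_unitaryGroup_iff').mp hA.eigenvectorUnitary.2
  have hUU' : U * Uᴴ = 1 := by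
    rw [← Matrix.star_eq_conjTranspose]
    exact (Matrix.mem_unitaryGroup_iff).mp hA.eigenvectorUnitary.2
  have hVV : Vᴴ * V = 1 := by
    rw [← Matrix.star_eq_conjTranspose]
    exact (Matrix.mem_unitaryGroup_iff').mp hB.eigenvectorUnitary.2
  have hVV' : V * Vᴴ = 1 := by
    rw [← Matrix.star_eq_conjTranspose]
    exact (Matrix.mem_unitaryGroup_iff).mp hB.eigenvectorUnitary.2
  set W : Matrix (Fin N) (Fin N) ℂ := Uᴴ * V with hW
  set DA : Matrix (Fin N) (Fin N) ℂ := diagonal (fun i => (α i : ℂ)) with hDA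
  set DB : Matrix (Fin N) (Fin N) ℂ := diagonal (fun i => (β i : ℂ)) with hDB
  have hcast : ∀ (f : Fin N → ℝ), (fun i => ((f i : ℝ) : ℂ)) = RCLike.ofReal ∘ f :=
    fun f => rfl
  have hAspec : A = U * DA * Uᴴ := by
    rw [hDA, hcast, ← Matrix.star_eq_conjTranspose]
    exact hA.spectral_theorem
  have hBspec : B = V * DB * Vᴴ := by
    rw [hDB, hcast, ← Matrix.star_eq_conjTranspose]
    exact hB.spectral_theorem
  set M0 : Matrix (Fin N) (Fin N) ℂ := DA * W - W * DB with hM0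
  have hdecomp : A - B = U * M0 * Vᴴ := by
    rw [hM0, Matrix.mul_sub, Matrix.sub_mul, hAspec, hBspec]
    refine congrArg₂ (· - ·) ?_ ?_
    · symm
      rw [hW]
      calc U * (DA * (Uᴴ * V)) * Vᴴ = U * DA * Uᴴ * (V * Vᴴ) := by
            simp only [Matrix.mul_assoc]
        _ = U * DA * Uᴴ := by rw [hVV', Matrix.mul_one]
    · symm
      rw [hW]
      calc U * (Uᴴ * V * DB) * Vᴴ = U * Uᴴ * (V * DB * Vᴴ) := by
            simp only [Matrix.mul_assoc]
        _ = V * DB * Vᴴ := by rw [hUU', Matrix.one_mul]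
  -- Frobenius norm reduction
  have hfrob : ∑ i, ∑ j, ‖(A - B) i j‖ ^ 2
      = ∑ i, ∑ j, ‖M0 i j‖ ^ 2 := by
    rw [hdecomp]
    exact frob_inv U V M0 hUU hVV
  -- entries of M0
  have hM0entry : ∀ i j, ‖M0 i j‖ ^ 2
      = (α i - β j) ^ 2 * ‖W i j‖ ^ 2 := by
    intro i j
    have : M0 i j = ((α i : ℂ) - (β j : ℂ)) * W i j := by
      rw [hM0, Matrix.sub_apply, Matrix.diagonal_mul, Matrix.mul_diagonal]
      ring
    rw [this, norm_mul, mul_pow, ← Complex.ofReal_sub, Complex.norm_real, Real.norm_eq_abs, sq_abs]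
  set s : Fin N → Fin N → ℝ := fun i j => ‖W i j‖ ^ 2 with hs
  have hsnn : ∀ i j, 0 ≤ s i j := fun i j => sq_nonneg _
  have hWU : Wᴴ * W = 1 := by
    rw [hW, conjTranspose_mul, conjTranspose_conjTranspose]
    calc Vᴴ * U * (Uᴴ * V) = Vᴴ * (U * Uᴴ) * V := by simp only [Matrix.mul_assoc]
      _ = 1 := by rw [hUU', Matrix.mul_one, hVV]
  have hWU' : W * Wᴴ = 1 := by
    rw [hW, conjTranspose_mul, conjTranspose_conjTranspose]
    calc Uᴴ * V * (Vᴴ * U) = Uᴴ * (V * Vᴴ) * U := by simp only [Matrix.mul_assoc]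
      _ = 1 := by rw [hVV', Matrix.mul_one, hUU]
  have habs : ∀ (z : ℂ), ((star z) * z).re = ‖z‖ ^ 2 := by
    intro z
    rw [mul_comm, Complex.star_def, Complex.mul_conj, Complex.sq_norm]
    simp
  have hsrow : ∀ i, ∑ j, s i j = 1 := by
    intro i
    have h1 : (W * Wᴴ) i i = 1 := by rw [hWU']; simp
    have : ((W * Wᴴ) i i).re = 1 := by rw [h1]; simp
    rw [Matrix.mul_apply, Complex.re_sum] at this
    rw [← this]
    refine Finset.sum_congr rfl fun j _ => ?_
    show ‖W i j‖ ^ 2 = (W i j * Wᴴ j i).re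
    rw [Matrix.conjTranspose_apply, mul_comm]
    exact (habs _).symm
  have hscol : ∀ j, ∑ i, s i j = 1 := by
    intro j
    have h1 : (Wᴴ * W) j j = 1 := by rw [hWU]; simp
    have : ((Wᴴ * W) j j).re = 1 := by rw [h1]; simp
    rw [Matrix.mul_apply, Complex.re_sum] at this
    rw [← this]
    refine Finset.sum_congr rfl fun i _ => ?_
    show ‖W i j‖ ^ 2 = (Wᴴ j i * W i j).re
    rw [Matrix.conjTranspose_apply]
    exact (habs _).symm
  -- sums of squares of eigenvalues
  have hsumA : ∑ i, lamA i ^ 2 = ∑ i, α i ^ 2 := by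
    rw [hσ]; exact Equiv.sum_comp σ (fun i => α i ^ 2)
  have hsumB : ∑ i, lamB i ^ 2 = ∑ i, β i ^ 2 := by
    rw [hτ]; exact Equiv.sum_comp τ (fun i => β i ^ 2)
  -- the key inequality
  have hkey : ∑ i, ∑ j, s i j * (α i * β j) ≤ ∑ i, lamA i * lamB i := by
    have h := key (fun i j => s (σ i) (τ j)) lamA lamB hAmono hBmono
      (fun i j => hsnn _ _)
      (fun i => by rw [← hsrow (σ i)]; exact Equiv.sum_comp τ (fun j => s (σ i) j))
      (fun j => by rw [← hscol (τ j)]; exact Equiv.sum_comp σ (fun i => s i (τ j)))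
    refine le_trans (le_of_eq ?_) h
    rw [← Equiv.sum_comp σ (fun i => ∑ j, s i j * (α i * β j))]
    refine Finset.sum_congr rfl fun i _ => ?_
    rw [← Equiv.sum_comp τ (fun j => s (σ i) j * (α (σ i) * β j))]
    refine Finset.sum_congr rfl fun j _ => ?_
    rw [hσ, hτ]
    simp
  -- expand RHS
  have hRHS : ∑ i, ∑ j, ‖(A - B) i j‖ ^ 2
      = ∑ i, α i ^ 2 + ∑ j, β j ^ 2 - 2 * ∑ i, ∑ j, s i j * (α i * β j) := by
    rw [hfrob]
    have : ∀ i, ∑ j, ‖M0 i j‖ ^ 2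
        = ∑ j, (s i j * α i ^ 2 + s i j * β j ^ 2 - 2 * (s i j * (α i * β j))) := by
      intro i
      refine Finset.sum_congr rfl fun j _ => ?_
      rw [hM0entry i j]; ring
    rw [Finset.sum_congr rfl fun i _ => this i]
    calc ∑ i, ∑ j, (s i j * α i ^ 2 + s i j * β j ^ 2 - 2 * (s i j * (α i * β j)))
        = ∑ i, ((∑ j, s i j * α i ^ 2) + (∑ j, s i j * β j ^ 2)
            - ∑ j, 2 * (s i j * (α i * β j))) := by
          refine Finset.sum_congr rfl fun i _ => ?_
          rw [Finset.sum_sub_distrib, Finset.sum_add_distrib]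
      _ = (∑ i, ∑ j, s i j * α i ^ 2) + (∑ i, ∑ j, s i j * β j ^ 2)
            - ∑ i, ∑ j, 2 * (s i j * (α i * β j)) := by
          rw [Finset.sum_sub_distrib, Finset.sum_add_distrib]
      _ = ∑ i, α i ^ 2 + ∑ j, β j ^ 2 - 2 * ∑ i, ∑ j, s i j * (α i * β j) := by
          congr 1
          congr 1
          · refine Finset.sum_congr rfl fun i _ => ?_
            rw [← Finset.sum_mul, hsrow i, one_mul]
          · rw [Finset.sum_comm]
            refine Finset.sum_congr rfl fun j _ => ?_
            rw [← Finset.sum_mul, hscol j, one_mul]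
          · rw [Finset.mul_sum]
            refine Finset.sum_congr rfl fun i _ => (Finset.mul_sum _ _ _).symm
  -- conclude
  have hLHS : ∑ i, |lamA i - lamB i| ^ 2
      = ∑ i, lamA i ^ 2 + ∑ i, lamB i ^ 2 - 2 * ∑ i, lamA i * lamB i := by
    calc ∑ i, |lamA i - lamB i| ^ 2
        = ∑ i, (lamA i ^ 2 + lamB i ^ 2 - 2 * (lamA i * lamB i)) := by
          refine Finset.sum_congr rfl fun i _ => ?_
          rw [sq_abs]; ring
      _ = _ := by
          rw [Finset.sum_sub_distrib, Finset.sum_add_distrib, ← Finset.mul_sum]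
  rw [hLHS, hRHS, hsumA, hsumB]
  linarith [hkey]

end HWAux
end

section
/- Let T be a real random variable with law μ_T and cumulative distribution function F_T. Then there exists a triangular array (σ_{k,N})_{1≤k≤N, N≥2} of real numbers such that: (1) max_{2≤k≤N} |σ_{k,N} − σ_{k−1,N}| → 0 as N → ∞; and (2) the empirical measures ν_N = (1/(N−1))·Σ_{k=1}^{N−1} δ_{σ_{k,N}} converge weakly to μ_T. -/
open MeasureTheory Set Filter

namespace SVA

noncomputable section

/-- grid point -/
def gp (j i : ℕ) : ℝ := -(j:ℝ) + (i:ℝ)/(j:ℝ)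

/-- number of pieces -/
def Lp (j : ℕ) : ℕ := 2*j^2

/-- representative points -/
def pt (j i : ℕ) : ℝ := gp j (min (i+1) (Lp j))

/-- weights -/
def w (μ : Measure ℝ) (j i : ℕ) : ℝ :=
  if i < Lp j then (μ (Set.Ioc (gp j i) (gp j (i+1)))).toReal
  else (μ (Set.Ioc (-(j:ℝ)) (j:ℝ))ᶜ).toReal

/-- mixed weights -/
def w' (μ : Measure ℝ) (j i : ℕ) : ℝ :=
  (1 - (j:ℝ)⁻¹) * w μ j i + (j:ℝ)⁻¹/((Lp j : ℝ) + 1)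

/-- cumulative counts -/
def C (μ : Measure ℝ) (j n i : ℕ) : ℕ :=
  ⌊(n:ℝ) * ∑ l ∈ Finset.range i, w' μ j l⌋₊

/-- index of k-th sample -/
def idx (μ : Measure ℝ) (j n k : ℕ) : ℕ := sInf {i | k ≤ C μ j n (i+1)}

/-- level used at stage N -/
def jN (N : ℕ) : ℕ := max 1 (Nat.findGreatest (fun j => 12*j^4 ≤ N) N)

/-- the array -/
def sig (μ : Measure ℝ) (N k : ℕ) : ℝ :=
  pt (jN N) (idx μ (jN N) (N-1) (min k (N-1)))

variable {j : ℕ} (hj : 1 ≤ j)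

lemma jpos (hj : 1 ≤ j) : (0:ℝ) < (j:ℝ) := by exact_mod_cast hj

include hj

lemma gp_succ (i : ℕ) : gp j (i+1) = gp j i + (j:ℝ)⁻¹ := by
  have := (jpos hj).ne'
  simp only [gp]
  push_cast
  field_simp
  ring

lemma gp_mono : Monotone (gp j) := by
  have h := jpos hj
  intro a b hab
  simp only [gp, add_le_add_iff_left]
  gcongr

omit hj in lemma gp_zero : gp j 0 = -(j:ℝ) := by simp [gp]

lemma gp_L : gp j (Lp j) = (j:ℝ) := by
  have := (jpos hj).ne'
  simp only [gp, Lp]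
  push_cast
  field_simp
  ring

omit hj in lemma gp_diff (a b : ℕ) : gp j b - gp j a = ((b:ℝ) - (a:ℝ))/(j:ℝ) := by
  simp only [gp]
  ring


omit hj

lemma sum_setIntegral (μ : Measure ℝ) (g : ℝ → ℝ) (hg : Integrable g μ) (a : ℕ → ℝ)
    (ha : Monotone a) :
    ∀ r, ∑ i ∈ Finset.range r, ∫ x in Ioc (a i) (a (i+1)), g x ∂μ
      = ∫ x in Ioc (a 0) (a r), g x ∂μ := by
  intro r
  induction r with
  | zero => simp
  | succ r ih =>
    rw [Finset.sum_range_succ, ih,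
      ← Set.Ioc_union_Ioc_eq_Ioc (ha (Nat.zero_le r)) (ha (Nat.le_succ r)),
      setIntegral_union ?_ measurableSet_Ioc hg.integrableOn hg.integrableOn]
    rw [Set.disjoint_left]
    rintro x ⟨_, h2⟩ ⟨h3, _⟩
    exact absurd (h3.trans_le h2) (lt_irrefl _)

variable (μ : Measure ℝ) [IsProbabilityMeasure μ]

include hj

lemma sum_w : ∑ i ∈ Finset.range (Lp j + 1), w μ j i = 1 := by
  rw [Finset.sum_range_succ]
  have h1 : ∀ i ∈ Finset.range (Lp j), w μ j i
      = ∫ x in Ioc (gp j i) (gp j (i+1)), (fun _ : ℝ => (1:ℝ)) x ∂μ := by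
    intro i hi
    rw [setIntegral_const, smul_eq_mul, mul_one, w, if_pos (Finset.mem_range.mp hi), measureReal_def]
  rw [Finset.sum_congr rfl h1,
    sum_setIntegral μ (fun _ : ℝ => (1:ℝ)) (integrable_const 1) _ (gp_mono hj),
    setIntegral_const, smul_eq_mul, mul_one, gp_zero, gp_L hj, w, if_neg (lt_irrefl _),
    measureReal_def, ← ENNReal.toReal_add (measure_ne_top μ _) (measure_ne_top μ _),
    measure_add_measure_compl measurableSet_Ioc, measure_univ, ENNReal.toReal_one]

omit hj

lemma w_nonneg (i : ℕ) : 0 ≤ w μ j i := by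
  unfold w; split <;> exact ENNReal.toReal_nonneg

include hj

lemma theta_nonneg : (0:ℝ) ≤ 1 - (j:ℝ)⁻¹ := by
  have h : (1:ℝ) ≤ (j:ℝ) := by exact_mod_cast hj
  have := inv_le_one_of_one_le₀ h
  linarith

omit hj

lemma mp_pos : (0:ℝ) < (Lp j : ℝ) + 1 := by positivity

include hj

lemma w'_lb (i : ℕ) : (j:ℝ)⁻¹/((Lp j : ℝ)+1) ≤ w' μ j i :=
  le_add_of_nonneg_left (mul_nonneg (theta_nonneg hj) (w_nonneg μ i))

lemma w'_nonneg (i : ℕ) : 0 ≤ w' μ j i := by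
  refine le_trans ?_ (w'_lb hj μ i)
  positivity

lemma sum_w' : ∑ i ∈ Finset.range (Lp j + 1), w' μ j i = 1 := by
  unfold w'
  rw [Finset.sum_add_distrib, ← Finset.mul_sum, sum_w hj μ, Finset.sum_const,
    Finset.card_range, nsmul_eq_mul]
  have h0 : ((Lp j : ℝ) + 1) ≠ 0 := (mp_pos).ne'
  push_cast
  field_simp
  ring

omit hj

lemma W_nonneg (n i : ℕ) (hj : 1 ≤ j) :
    0 ≤ (n:ℝ) * ∑ l ∈ Finset.range i, w' μ j l :=
  mul_nonneg (Nat.cast_nonneg n) (Finset.sum_nonneg fun l _ => w'_nonneg hj μ l)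

lemma C_zero (n : ℕ) : C μ j n 0 = 0 := by simp [C]

include hj

lemma C_last (n : ℕ) : C μ j n (Lp j + 1) = n := by
  rw [C, sum_w' hj μ, mul_one, Nat.floor_natCast]

lemma C_mono (n : ℕ) : Monotone (C μ j n) := by
  intro a b hab
  apply Nat.floor_mono
  apply mul_le_mul_of_nonneg_left _ (Nat.cast_nonneg n)
  exact Finset.sum_le_sum_of_subset_of_nonneg
    (Finset.range_subset_range.mpr hab) (fun l _ _ => w'_nonneg hj μ l)

lemma C_le (n i : ℕ) : (C μ j n i : ℝ) ≤ (n:ℝ) * ∑ l ∈ Finset.range i, w' μ j l :=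
  Nat.floor_le (W_nonneg μ n i hj)

omit hj

lemma lt_C (n i : ℕ) : (n:ℝ) * ∑ l ∈ Finset.range i, w' μ j l < (C μ j n i : ℝ) + 1 :=
  Nat.lt_floor_add_one _

include hj

lemma C_strict (n : ℕ) (hn : 1 ≤ (n:ℝ) * ((j:ℝ)⁻¹/((Lp j : ℝ)+1))) (i : ℕ) :
    C μ j n i + 1 ≤ C μ j n (i+1) := by
  have key : (n:ℝ) * ∑ l ∈ Finset.range i, w' μ j l + 1
      ≤ (n:ℝ) * ∑ l ∈ Finset.range (i+1), w' μ j l := by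
    rw [Finset.sum_range_succ, mul_add]
    have : 1 ≤ (n:ℝ) * w' μ j i :=
      hn.trans (mul_le_mul_of_nonneg_left (w'_lb hj μ i) (Nat.cast_nonneg n))
    linarith
  calc C μ j n i + 1 = ⌊(n:ℝ) * ∑ l ∈ Finset.range i, w' μ j l + 1⌋₊ := by
        rw [Nat.floor_add_one (W_nonneg μ n i hj)]; rfl
    _ ≤ C μ j n (i+1) := Nat.floor_mono key

lemma count_err (n i : ℕ) :
    |((C μ j n (i+1) : ℝ) - (C μ j n i : ℝ)) - (n:ℝ) * w' μ j i| ≤ 2 := by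
  have h1 := C_le hj μ n (i+1)
  have h2 := lt_C (j := j) μ n (i+1)
  have h3 := C_le hj μ n i
  have h4 := lt_C (j := j) μ n i
  rw [Finset.sum_range_succ, mul_add] at h1 h2
  rw [abs_le]
  constructor <;> linarith

lemma idx_eq (n i k : ℕ) (h1 : C μ j n i < k) (h2 : k ≤ C μ j n (i+1)) :
    idx μ j n k = i := by
  refine le_antisymm (Nat.sInf_le h2) ?_
  by_contra hlt
  push_neg at hlt
  have hne : {i | k ≤ C μ j n (i+1)}.Nonempty := ⟨i, h2⟩
  have hmem : k ≤ C μ j n (idx μ j n k + 1) := Nat.sInf_mem hne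
  have : C μ j n (idx μ j n k + 1) ≤ C μ j n i := C_mono hj μ n hlt
  omega

lemma idx_mem (n k : ℕ) (hk : k ≤ n) : k ≤ C μ j n (idx μ j n k + 1) := by
  have hne : {i | k ≤ C μ j n (i+1)}.Nonempty :=
    ⟨Lp j, show k ≤ C μ j n (Lp j + 1) by rw [C_last hj μ n]; exact hk⟩
  exact Nat.sInf_mem hne

lemma idx_mono (n k k' : ℕ) (hk : k ≤ k') (hk' : k' ≤ n) :
    idx μ j n k ≤ idx μ j n k' :=
  Nat.sInf_le (hk.trans (idx_mem hj μ n k' hk'))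

lemma idx_le_succ (n k : ℕ) (hn : 1 ≤ (n:ℝ) * ((j:ℝ)⁻¹/((Lp j : ℝ)+1)))
    (hk : k ≤ n) : idx μ j n (k+1) ≤ idx μ j n k + 1 := by
  apply Nat.sInf_le
  have h1 : k ≤ C μ j n (idx μ j n k + 1) := idx_mem hj μ n k hk
  have h2 := C_strict hj μ n hn (idx μ j n k + 1)
  show k + 1 ≤ _
  omega

lemma sum_blocks (n : ℕ) (f : ℝ → ℝ) :
    ∀ r, ∑ k ∈ Finset.Ioc 0 (C μ j n r), f (pt j (idx μ j n k))
      = ∑ i ∈ Finset.range r, ((C μ j n (i+1) : ℝ) - (C μ j n i : ℝ)) * f (pt j i) := by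
  intro r
  induction r with
  | zero => simp [C_zero]
  | succ r ih =>
    rw [Finset.sum_range_succ, ← ih,
      ← Finset.sum_Ioc_consecutive _ (Nat.zero_le (C μ j n r))
        (C_mono hj μ n (Nat.le_succ r))]
    congr 1
    rw [Finset.sum_congr rfl (fun k hk => ?_), Finset.sum_const, Nat.card_Ioc,
      nsmul_eq_mul, Nat.cast_sub (C_mono hj μ n (Nat.le_succ r))]
    have hk' := Finset.mem_Ioc.mp hk
    rw [idx_eq hj μ n r k hk'.1 hk'.2]


lemma pt_mono : Monotone (pt j) := fun a b hab =>
  gp_mono hj (min_le_min (by omega) le_rfl)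

lemma pt_succ_le (i : ℕ) : pt j (i+1) ≤ pt j i + (j:ℝ)⁻¹ := by
  have h : min (i+1+1) (Lp j) ≤ min (i+1) (Lp j) + 1 := by omega
  calc pt j (i+1) ≤ gp j (min (i+1) (Lp j) + 1) := gp_mono hj h
    _ = pt j i + (j:ℝ)⁻¹ := gp_succ hj _

lemma pt_close {a b : ℕ} (h1 : a ≤ b) (h2 : b ≤ a + 1) :
    |pt j b - pt j a| ≤ (j:ℝ)⁻¹ := by
  rw [abs_of_nonneg (sub_nonneg.2 (pt_mono hj h1))]
  have : b = a ∨ b = a + 1 := by omega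
  rcases this with rfl | rfl
  · simp only [sub_self]
    positivity
  · have := pt_succ_le hj (j := j) a
    linarith

lemma pt_lo (i : ℕ) (hi : i < Lp j) : pt j i = gp j (i+1) := by
  unfold pt; rw [min_eq_left (by omega)]

omit hj

lemma pt_hi : pt j (Lp j) = gp j (Lp j) := by
  unfold pt; rw [min_eq_right (by omega)]

lemma tail_tendsto : Tendsto (fun M : ℕ => μ {x : ℝ | (M:ℝ) < |x|}) atTop (nhds 0) := by
  have hmeas : ∀ M : ℕ, NullMeasurableSet {x : ℝ | (M:ℝ) < |x|} μ := fun M =>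
    ((isOpen_lt continuous_const continuous_abs).measurableSet).nullMeasurableSet
  have hanti : Antitone (fun M : ℕ => {x : ℝ | (M:ℝ) < |x|}) := by
    intro a b hab x hx
    simp only [Set.mem_setOf_eq] at *
    have : (a:ℝ) ≤ (b:ℝ) := by exact_mod_cast hab
    linarith
  have hempty : (⋂ M : ℕ, {x : ℝ | (M:ℝ) < |x|}) = (∅ : Set ℝ) := by
    ext x
    simp only [Set.mem_iInter, Set.mem_setOf_eq, Set.mem_empty_iff_false, iff_false, not_forall,
      not_lt]
    obtain ⟨M, hM⟩ := exists_nat_gt |x|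
    exact ⟨M, hM.le⟩
  have := tendsto_measure_iInter_atTop hmeas hanti ⟨0, measure_ne_top μ _⟩
  rwa [hempty, measure_empty] at this


lemma approx (f : BoundedContinuousFunction ℝ ℝ) {ε : ℝ} (hε : 0 < ε) :
    ∃ j₀ : ℕ, ∀ j : ℕ, j₀ ≤ j →
      |∑ i ∈ Finset.range (Lp j + 1), w μ j i * f (pt j i) - ∫ x, f x ∂μ| ≤ ε := by
  have hf0 : (0:ℝ) ≤ ‖f‖ := norm_nonneg f
  set ε' : ℝ := ε / (2 + 4*‖f‖) with hε'def
  have hε' : 0 < ε' := by positivity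
  -- tail control
  have htr : Tendsto (fun M : ℕ => (μ {x : ℝ | (M:ℝ) < |x|}).toReal) atTop (nhds 0) := by
    have h2 := (ENNReal.tendsto_toReal (a := 0) (by simp)).comp (tail_tendsto μ)
    exact h2
  obtain ⟨M₀, hM₀⟩ := (Metric.tendsto_atTop.mp htr) ε' hε'
  have htail : ∀ Mx : ℕ, M₀ ≤ Mx → (μ {x : ℝ | (Mx:ℝ) < |x|}).toReal < ε' := by
    intro Mx hMx
    have := hM₀ Mx hMx
    rwa [Real.dist_eq, sub_zero, abs_of_nonneg ENNReal.toReal_nonneg] at this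
  set M₁ : ℕ := M₀ + 1 with hM₁def
  set M : ℕ := M₁ + 1 with hMdef
  have hcastM : (M:ℝ) = (M₁:ℝ) + 1 := by rw [hMdef]; push_cast; ring
  -- uniform continuity on a compact interval
  set K : Set ℝ := Set.Icc (-(M:ℝ) - 1) ((M:ℝ) + 1) with hKdef
  have hUC : UniformContinuousOn f K :=
    isCompact_Icc.uniformContinuousOn_of_continuous f.continuous.continuousOn
  obtain ⟨δ, hδ, hδ'⟩ := (Metric.uniformContinuousOn_iff.mp hUC) ε' hε'
  refine ⟨max M ⌈δ⁻¹⌉₊, fun j hjge => ?_⟩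
  have hjM : M ≤ j := le_trans (le_max_left _ _) hjge
  have hj : 1 ≤ j := le_trans (by omega) hjM
  have hjpos := jpos hj
  have hjinv : (j:ℝ)⁻¹ ≤ δ := by
    have h1 : δ⁻¹ ≤ (j:ℝ) := le_trans (Nat.le_ceil _) (by
      exact_mod_cast le_trans (le_max_right M ⌈δ⁻¹⌉₊) hjge)
    calc (j:ℝ)⁻¹ ≤ (δ⁻¹)⁻¹ := by
          apply inv_anti₀ (by positivity) h1
      _ = δ := inv_inv δ
  have hjinv1 : (j:ℝ)⁻¹ ≤ 1 := by
    rw [inv_le_one_iff₀]; right; exact_mod_cast hj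
  have hjMr : (M:ℝ) ≤ (j:ℝ) := by exact_mod_cast hjM
  -- the dominating function
  set tl : Set ℝ := {x : ℝ | (M₁:ℝ) < |x|} with htldef
  have htlmeas : MeasurableSet tl := (isOpen_lt continuous_const continuous_abs).measurableSet
  set h : ℝ → ℝ := fun x => ε' + tl.indicator (fun _ => 2*‖f‖) x with hhdef
  have hint : Integrable h μ :=
    (integrable_const ε').add ((integrable_const (2*‖f‖)).indicator htlmeas)
  have hnonneg : ∀ x, 0 ≤ h x := by
    intro x
    have : 0 ≤ tl.indicator (fun _ => 2*‖f‖) x :=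
      Set.indicator_nonneg (fun _ _ => by positivity) x
    simp only [hhdef]
    linarith
  -- pointwise bound on each piece
  have hpw : ∀ i : ℕ, i < Lp j → ∀ x ∈ Ioc (gp j i) (gp j (i+1)),
      |f (gp j (i+1)) - f x| ≤ h x := by
    intro i hi x hx
    have hgap : gp j (i+1) - x < (j:ℝ)⁻¹ := by
      have := gp_succ hj (j := j) i
      have hx1 := hx.1
      linarith
    have hgap0 : 0 ≤ gp j (i+1) - x := sub_nonneg.2 hx.2
    by_cases hxs : |x| ≤ (M₁:ℝ)
    · -- uniform continuity case
      obtain ⟨hxl, hxr⟩ := abs_le.mp hxs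
      have hxK : x ∈ K := by
        rw [hKdef, Set.mem_Icc]
        constructor <;> linarith
      have hyK : gp j (i+1) ∈ K := by
        rw [hKdef, Set.mem_Icc]
        constructor <;> linarith
      have hdist : dist (gp j (i+1)) x < δ := by
        rw [Real.dist_eq, abs_of_nonneg hgap0]
        linarith
      have := hδ' (gp j (i+1)) hyK x hxK hdist
      rw [Real.dist_eq] at this
      have hind : 0 ≤ tl.indicator (fun _ => 2*‖f‖) x :=
        Set.indicator_nonneg (fun _ _ => by positivity) x
      simp only [hhdef]
      linarith
    · -- tail case
      push_neg at hxs
      have hmem : x ∈ tl := hxs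
      have hb : |f (gp j (i+1)) - f x| ≤ 2*‖f‖ := by
        have h1 : ‖f (gp j (i+1))‖ ≤ ‖f‖ := f.norm_coe_le_norm _
        have h2 : ‖f x‖ ≤ ‖f‖ := f.norm_coe_le_norm _
        rw [Real.norm_eq_abs] at h1 h2
        calc |f (gp j (i+1)) - f x| ≤ |f (gp j (i+1))| + |f x| := abs_sub _ _
          _ ≤ 2*‖f‖ := by linarith
      simp only [hhdef, Set.indicator_of_mem hmem]
      linarith
  -- split the integral
  have hsplit : ∫ x, f x ∂μ
      = ∑ i ∈ Finset.range (Lp j), (∫ x in Ioc (gp j i) (gp j (i+1)), f x ∂μ)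
        + ∫ x in (Ioc (-(j:ℝ)) (j:ℝ))ᶜ, f x ∂μ := by
    rw [sum_setIntegral μ f (f.integrable μ) _ (gp_mono hj), gp_zero, gp_L hj,
      integral_add_compl measurableSet_Ioc (f.integrable μ)]
  -- split the sum
  have hsum : ∑ i ∈ Finset.range (Lp j + 1), w μ j i * f (pt j i)
      = ∑ i ∈ Finset.range (Lp j), w μ j i * f (gp j (i+1))
        + (μ (Ioc (-(j:ℝ)) (j:ℝ))ᶜ).toReal * f (gp j (Lp j)) := by
    rw [Finset.sum_range_succ, pt_hi]
    congr 1
    · exact Finset.sum_congr rfl fun i hi => by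
        rw [pt_lo hj i (Finset.mem_range.mp hi)]
    · rw [w, if_neg (lt_irrefl _)]
  -- per-piece bound
  have hterm : ∀ i ∈ Finset.range (Lp j),
      |w μ j i * f (gp j (i+1)) - ∫ x in Ioc (gp j i) (gp j (i+1)), f x ∂μ|
        ≤ ∫ x in Ioc (gp j i) (gp j (i+1)), h x ∂μ := by
    intro i hi
    have hi' := Finset.mem_range.mp hi
    have hconst_int : IntegrableOn (fun _ : ℝ => f (gp j (i+1))) (Ioc (gp j i) (gp j (i+1))) μ :=
      integrableOn_const (measure_ne_top μ _)
    have hw : w μ j i * f (gp j (i+1))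
        = ∫ x in Ioc (gp j i) (gp j (i+1)), f (gp j (i+1)) ∂μ := by
      rw [setIntegral_const, smul_eq_mul, w, if_pos hi', measureReal_def]
    rw [hw, ← integral_sub hconst_int (f.integrable μ).integrableOn]
    calc |∫ x in Ioc (gp j i) (gp j (i+1)), (f (gp j (i+1)) - f x) ∂μ|
        ≤ ∫ x in Ioc (gp j i) (gp j (i+1)), |f (gp j (i+1)) - f x| ∂μ := by
          rw [← Real.norm_eq_abs]
          refine le_trans (norm_integral_le_integral_norm _) (le_of_eq ?_)
          simp only [Real.norm_eq_abs]
      _ ≤ ∫ x in Ioc (gp j i) (gp j (i+1)), h x ∂μ := by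
          apply setIntegral_mono_on
            ((hconst_int.sub (f.integrable μ).integrableOn).abs)
            hint.integrableOn measurableSet_Ioc
          exact fun x hx => hpw i hi' x hx
  -- sum of h-integrals
  have hhsum : ∑ i ∈ Finset.range (Lp j), (∫ x in Ioc (gp j i) (gp j (i+1)), h x ∂μ)
      ≤ ε' + 2*‖f‖*ε' := by
    rw [sum_setIntegral μ h hint _ (gp_mono hj)]
    have h1 : ∫ x in Ioc (gp j 0) (gp j (Lp j)), h x ∂μ ≤ ∫ x, h x ∂μ :=
      setIntegral_le_integral hint (Filter.Eventually.of_forall hnonneg)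
    have h2 : ∫ x, h x ∂μ = ε' + (μ tl).toReal * (2*‖f‖) := by
      rw [hhdef]
      rw [integral_add (integrable_const ε') ((integrable_const (2*‖f‖)).indicator htlmeas),
        integral_const, integral_indicator_const _ htlmeas, measureReal_def, measure_univ, smul_eq_mul,
        ENNReal.toReal_one, one_mul, smul_eq_mul, measureReal_def]
    have h3 : (μ tl).toReal < ε' := htail M₁ (by omega)
    have h4 : (μ tl).toReal * (2*‖f‖) ≤ ε' * (2*‖f‖) := by
      apply mul_le_mul_of_nonneg_right h3.le (by positivity)
    calc _ ≤ ∫ x, h x ∂μ := h1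
      _ = ε' + (μ tl).toReal * (2*‖f‖) := h2
      _ ≤ ε' + 2*‖f‖*ε' := by linarith
  -- tail term bound
  have hcompl_sub : (Ioc (-(j:ℝ)) (j:ℝ))ᶜ ⊆ tl := by
    intro x hx
    simp only [Set.mem_compl_iff, Set.mem_Ioc, not_and_or, not_lt, not_le] at hx
    have hM₁j : (M₁:ℝ) < (j:ℝ) := by
      have : (M₁:ℝ) + 1 ≤ (j:ℝ) := by rw [← hcastM]; exact hjMr
      linarith
    have hax := le_abs_self x
    have hax' := neg_abs_le x
    rcases hx with hx | hx
    · show (M₁:ℝ) < |x|; linarith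
    · show (M₁:ℝ) < |x|; linarith
  have hcompl : (μ (Ioc (-(j:ℝ)) (j:ℝ))ᶜ).toReal < ε' :=
    lt_of_le_of_lt (ENNReal.toReal_mono (measure_ne_top μ _) (measure_mono hcompl_sub))
      (htail M₁ (by omega))
  have htail_term : |(μ (Ioc (-(j:ℝ)) (j:ℝ))ᶜ).toReal * f (gp j (Lp j))
      - ∫ x in (Ioc (-(j:ℝ)) (j:ℝ))ᶜ, f x ∂μ| ≤ 2*‖f‖*ε' := by
    have h1 : |(μ (Ioc (-(j:ℝ)) (j:ℝ))ᶜ).toReal * f (gp j (Lp j))|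
        ≤ (μ (Ioc (-(j:ℝ)) (j:ℝ))ᶜ).toReal * ‖f‖ := by
      rw [abs_mul, abs_of_nonneg ENNReal.toReal_nonneg]
      apply mul_le_mul_of_nonneg_left _ ENNReal.toReal_nonneg
      rw [← Real.norm_eq_abs]
      exact f.norm_coe_le_norm _
    have h2 : |∫ x in (Ioc (-(j:ℝ)) (j:ℝ))ᶜ, f x ∂μ|
        ≤ ‖f‖ * (μ (Ioc (-(j:ℝ)) (j:ℝ))ᶜ).toReal := by
      rw [← Real.norm_eq_abs]
      exact norm_setIntegral_le_of_norm_le_const (measure_lt_top μ _)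
        (fun x _ => f.norm_coe_le_norm x)
    have h3 := abs_sub ((μ (Ioc (-(j:ℝ)) (j:ℝ))ᶜ).toReal * f (gp j (Lp j)))
      (∫ x in (Ioc (-(j:ℝ)) (j:ℝ))ᶜ, f x ∂μ)
    have h4 : (μ (Ioc (-(j:ℝ)) (j:ℝ))ᶜ).toReal * ‖f‖ ≤ ε' * ‖f‖ :=
      mul_le_mul_of_nonneg_right hcompl.le hf0
    have h5 : ‖f‖ * (μ (Ioc (-(j:ℝ)) (j:ℝ))ᶜ).toReal ≤ ‖f‖ * ε' :=
      mul_le_mul_of_nonneg_left hcompl.le hf0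
    calc |(μ (Ioc (-(j:ℝ)) (j:ℝ))ᶜ).toReal * f (gp j (Lp j))
        - ∫ x in (Ioc (-(j:ℝ)) (j:ℝ))ᶜ, f x ∂μ|
        ≤ |(μ (Ioc (-(j:ℝ)) (j:ℝ))ᶜ).toReal * f (gp j (Lp j))|
          + |∫ x in (Ioc (-(j:ℝ)) (j:ℝ))ᶜ, f x ∂μ| := h3
      _ ≤ 2*‖f‖*ε' := by linarith
  -- assemble
  have hmain : |∑ i ∈ Finset.range (Lp j + 1), w μ j i * f (pt j i) - ∫ x, f x ∂μ|
      ≤ (ε' + 2*‖f‖*ε') + 2*‖f‖*ε' := by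
    rw [hsum, hsplit]
    have heq : ∑ i ∈ Finset.range (Lp j), w μ j i * f (gp j (i+1))
        + (μ (Ioc (-(j:ℝ)) (j:ℝ))ᶜ).toReal * f (gp j (Lp j))
        - (∑ i ∈ Finset.range (Lp j), (∫ x in Ioc (gp j i) (gp j (i+1)), f x ∂μ)
          + ∫ x in (Ioc (-(j:ℝ)) (j:ℝ))ᶜ, f x ∂μ)
        = (∑ i ∈ Finset.range (Lp j), (w μ j i * f (gp j (i+1))
            - ∫ x in Ioc (gp j i) (gp j (i+1)), f x ∂μ))
          + ((μ (Ioc (-(j:ℝ)) (j:ℝ))ᶜ).toReal * f (gp j (Lp j))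
            - ∫ x in (Ioc (-(j:ℝ)) (j:ℝ))ᶜ, f x ∂μ) := by
      rw [Finset.sum_sub_distrib]
      ring
    rw [heq]
    calc |_ + _| ≤ |∑ i ∈ Finset.range (Lp j), (w μ j i * f (gp j (i+1))
            - ∫ x in Ioc (gp j i) (gp j (i+1)), f x ∂μ)|
          + |(μ (Ioc (-(j:ℝ)) (j:ℝ))ᶜ).toReal * f (gp j (Lp j))
            - ∫ x in (Ioc (-(j:ℝ)) (j:ℝ))ᶜ, f x ∂μ| := abs_add_le _ _
      _ ≤ (ε' + 2*‖f‖*ε') + 2*‖f‖*ε' := by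
          apply add_le_add _ htail_term
          calc |∑ i ∈ Finset.range (Lp j), (w μ j i * f (gp j (i+1))
              - ∫ x in Ioc (gp j i) (gp j (i+1)), f x ∂μ)|
              ≤ ∑ i ∈ Finset.range (Lp j), |w μ j i * f (gp j (i+1))
                - ∫ x in Ioc (gp j i) (gp j (i+1)), f x ∂μ| :=
                Finset.abs_sum_le_sum_abs _ _
            _ ≤ ∑ i ∈ Finset.range (Lp j), (∫ x in Ioc (gp j i) (gp j (i+1)), h x ∂μ) :=
                Finset.sum_le_sum hterm
            _ ≤ ε' + 2*‖f‖*ε' := hhsum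
  have hfinal : (ε' + 2*‖f‖*ε') + 2*‖f‖*ε' ≤ ε := by
    have : ε' * (2 + 4*‖f‖) = ε := by
      rw [hε'def]
      field_simp
    nlinarith [hε'.le]
  linarith

omit hj

lemma jN_pos (N : ℕ) : 1 ≤ jN N := le_max_left 1 _

lemma jN_tendsto : Tendsto jN atTop atTop := by
  rw [tendsto_atTop_atTop]
  intro b
  refine ⟨max b (12*b^4), fun N hN => ?_⟩
  have hb : b ≤ N := le_trans (le_max_left _ _) hN
  have hP : 12*b^4 ≤ N := le_trans (le_max_right _ _) hN
  exact le_trans (Nat.le_findGreatest (P := fun j => 12*j^4 ≤ N) hb hP) (le_max_right 1 _)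

lemma jN_prop {N : ℕ} (hN : 12 ≤ N) : 12 * (jN N)^4 ≤ N := by
  have h1 : 1 ≤ Nat.findGreatest (fun j => 12*j^4 ≤ N) N :=
    Nat.le_findGreatest (P := fun j => 12*j^4 ≤ N) (le_trans (by norm_num) hN)
      (by simpa using hN)
  have h2 : jN N = Nat.findGreatest (fun j => 12*j^4 ≤ N) N := max_eq_right h1
  rw [h2]
  exact Nat.findGreatest_spec (P := fun j => 12*j^4 ≤ N) (m := 1)
    (le_trans (by norm_num) hN) (by simpa using hN)

lemma jN_nums {N : ℕ} (hN : 12 ≤ N) :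
    jN N * (Lp (jN N) + 1) ≤ N - 1 ∧ 3*(jN N)^3 ≤ N - 1 := by
  have hP := jN_prop hN
  have hj := jN_pos N
  have hj3 : jN N ≤ (jN N)^3 := Nat.le_self_pow (by norm_num) _
  have hj34 : (jN N)^3 ≤ (jN N)^4 := Nat.pow_le_pow_right (by omega) (by norm_num)
  have hj31 : 1 ≤ (jN N)^3 := Nat.one_le_pow _ _ (by omega)
  have h1 : jN N * (Lp (jN N) + 1) = 2*(jN N)^3 + jN N := by simp only [Lp]; ring
  omega

lemma hn_real {N : ℕ} (hN : 13 ≤ N) :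
    1 ≤ ((N-1 : ℕ):ℝ) * (((jN N):ℝ)⁻¹/(((Lp (jN N)):ℝ)+1)) := by
  have hj := jN_pos N
  have hjpos := jpos hj
  have hnums := (jN_nums (N := N) (by omega)).1
  have hLpos : (0:ℝ) < ((Lp (jN N)):ℝ) + 1 := by positivity
  have hcast : ((jN N):ℝ) * (((Lp (jN N)):ℝ)+1) ≤ ((N-1 : ℕ):ℝ) := by
    calc ((jN N):ℝ) * (((Lp (jN N)):ℝ)+1)
        = ((jN N * (Lp (jN N) + 1) : ℕ) : ℝ) := by push_cast; ring
      _ ≤ ((N-1:ℕ):ℝ) := Nat.cast_le.mpr hnums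
  have heq : ((N-1 : ℕ):ℝ) * (((jN N):ℝ)⁻¹/(((Lp (jN N)):ℝ)+1))
      = ((N-1 : ℕ):ℝ) / (((jN N):ℝ) * (((Lp (jN N)):ℝ)+1)) := by
    rw [division_def, division_def, mul_inv]
  rw [heq, le_div_iff₀ (by positivity), one_mul]
  exact hcast

end

end SVA

lemma abs_sub_abs_triangle3 (a b c d : ℝ) : |a - d| ≤ |a - b| + |b - c| + |c - d| := by
  have h1 : a - d = (a - b) + (b - c) + (c - d) := by ring
  rw [h1]
  exact le_trans (abs_add_le _ _) (add_le_add_left (abs_add_le _ _) _)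

/-- For any probability law `μ_T` on ℝ there is a triangular array with vanishing mesh whose
empirical measures converge weakly to `μ_T`. -/
theorem exists_slowly_varying_array (μT : Measure ℝ) [IsProbabilityMeasure μT] :
    ∃ σ : ℕ → ℕ → ℝ,
      -- (1) vanishing mesh
      (∀ ε > (0 : ℝ), ∃ N₀, ∀ N, N₀ ≤ N → ∀ k, 2 ≤ k → k ≤ N → |σ N k - σ N (k - 1)| < ε) ∧
      -- (2) empirical convergence: ν_N = (1/(N−1)) Σ_{k=1}^{N−1} δ_{σ_{k,N}} ⇒ μ_T
      (∀ f : BoundedContinuousFunction ℝ ℝ,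
        Tendsto (fun N : ℕ => (1 / ((N : ℝ) - 1)) * ∑ k ∈ Finset.Icc 1 (N - 1), f (σ N k))
          atTop (nhds (∫ x, f x ∂μT))) := by
  classical
  refine ⟨SVA.sig μT, ?_, ?_⟩
  · -- mesh condition
    intro ε hε
    obtain ⟨j₁, hj₁⟩ := exists_nat_gt ε⁻¹
    obtain ⟨N₀, hN₀⟩ := Filter.eventually_atTop.mp
      ((SVA.jN_tendsto.eventually_ge_atTop j₁).and (Filter.eventually_ge_atTop (13:ℕ)))
    refine ⟨N₀, fun N hN k hk2 hkN => ?_⟩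
    obtain ⟨hjge, hN13⟩ := hN₀ N hN
    have hj : 1 ≤ SVA.jN N := SVA.jN_pos N
    have hjpos : (0:ℝ) < (SVA.jN N : ℝ) := by exact_mod_cast hj
    have hinv : ((SVA.jN N : ℝ))⁻¹ < ε := by
      have h1 : ε⁻¹ < (SVA.jN N : ℝ) := lt_of_lt_of_le hj₁ (by exact_mod_cast hjge)
      exact (inv_lt_comm₀ hε hjpos).mp h1
    by_cases hk : k ≤ N - 1
    · have hkn : k - 1 ≤ N - 1 := by omega
      have e1 : min k (N-1) = k := min_eq_left hk
      have e2 : min (k-1) (N-1) = k - 1 := min_eq_left hkn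
      have hmono := SVA.idx_mono hj μT (N-1) (k-1) k (by omega) hk
      have hsucc := SVA.idx_le_succ hj μT (N-1) (k-1) (SVA.hn_real hN13) hkn
      have hk1' : k - 1 + 1 = k := by omega
      rw [hk1'] at hsucc
      have hclose := SVA.pt_close hj hmono hsucc
      calc |SVA.sig μT N k - SVA.sig μT N (k-1)|
          = |SVA.pt (SVA.jN N) (SVA.idx μT (SVA.jN N) (N-1) k)
            - SVA.pt (SVA.jN N) (SVA.idx μT (SVA.jN N) (N-1) (k-1))| := by
            rw [SVA.sig, SVA.sig, e1, e2]
        _ ≤ (SVA.jN N : ℝ)⁻¹ := hclose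
        _ < ε := hinv
    · have e1 : min k (N-1) = N-1 := min_eq_right (by omega)
      have e2 : min (k-1) (N-1) = N-1 := by
        have : k - 1 = N - 1 := by omega
        rw [this, min_self]
      rw [SVA.sig, SVA.sig, e1, e2, sub_self, abs_zero]
      exact hε
  · -- weak convergence
    intro f
    have hf0 : (0:ℝ) ≤ ‖f‖ := norm_nonneg f
    rw [Metric.tendsto_atTop]
    intro ε hε
    obtain ⟨j₀, hj₀⟩ := SVA.approx μT f (half_pos hε)
    obtain ⟨j₂, hj₂⟩ := exists_nat_gt (8*‖f‖/ε)
    obtain ⟨N₀, hN₀⟩ := Filter.eventually_atTop.mp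
      ((SVA.jN_tendsto.eventually_ge_atTop (max j₀ j₂)).and (Filter.eventually_ge_atTop (13:ℕ)))
    refine ⟨N₀, fun N hN => ?_⟩
    obtain ⟨hjge, hN13⟩ := hN₀ N hN
    have hj : 1 ≤ SVA.jN N := SVA.jN_pos N
    have hjpos : (0:ℝ) < (SVA.jN N : ℝ) := by exact_mod_cast hj
    have hn1 : 1 ≤ N - 1 := by omega
    have hnpos : (0:ℝ) < ((N-1:ℕ):ℝ) := by exact_mod_cast hn1
    have hNcast : (N:ℝ) - 1 = ((N-1:ℕ):ℝ) := by
      have h1 : 1 ≤ N := by omega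
      rw [Nat.cast_sub h1, Nat.cast_one]
    rw [Real.dist_eq]
    -- rewrite the empirical sum
    have hIcc : Finset.Icc 1 (N-1) = Finset.Ioc 0 (N-1) := Finset.Icc_add_one_left_eq_Ioc 0 (N-1)
    have hmin : ∀ k ∈ Finset.Ioc 0 (N-1),
        f (SVA.sig μT N k) = f (SVA.pt (SVA.jN N) (SVA.idx μT (SVA.jN N) (N-1) k)) := by
      intro k hk
      rw [SVA.sig, min_eq_left (Finset.mem_Ioc.mp hk).2]
    have hsb := SVA.sum_blocks hj μT (N-1) (fun y => f y) (SVA.Lp (SVA.jN N) + 1)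
    rw [SVA.C_last hj μT (N-1)] at hsb
    have hSN : ∑ k ∈ Finset.Icc 1 (N-1), f (SVA.sig μT N k)
        = ∑ i ∈ Finset.range (SVA.Lp (SVA.jN N) + 1),
            (((SVA.C μT (SVA.jN N) (N-1) (i+1)):ℝ) - ((SVA.C μT (SVA.jN N) (N-1) i):ℝ))
              * f (SVA.pt (SVA.jN N) i) := by
      rw [hIcc, Finset.sum_congr rfl hmin, hsb]
    rw [hSN, hNcast]
    have hexp : (1/((N-1:ℕ):ℝ)) * ∑ i ∈ Finset.range (SVA.Lp (SVA.jN N) + 1),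
            (((SVA.C μT (SVA.jN N) (N-1) (i+1)):ℝ) - ((SVA.C μT (SVA.jN N) (N-1) i):ℝ))
              * f (SVA.pt (SVA.jN N) i)
        = ∑ i ∈ Finset.range (SVA.Lp (SVA.jN N) + 1),
            ((((SVA.C μT (SVA.jN N) (N-1) (i+1)):ℝ) - ((SVA.C μT (SVA.jN N) (N-1) i):ℝ))
              / ((N-1:ℕ):ℝ)) * f (SVA.pt (SVA.jN N) i) := by
      rw [Finset.mul_sum]
      exact Finset.sum_congr rfl fun i _ => by ring
    rw [hexp]
    -- the three error terms
    have hmnnat := (SVA.jN_nums (N := N) (by omega)).1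
    have hmn : ((SVA.Lp (SVA.jN N) + 1 : ℕ):ℝ) / ((N-1:ℕ):ℝ) ≤ ((SVA.jN N:ℝ))⁻¹ := by
      rw [div_le_iff₀ hnpos, inv_mul_eq_div, le_div_iff₀ hjpos]
      calc ((SVA.Lp (SVA.jN N) + 1 : ℕ):ℝ) * (SVA.jN N:ℝ)
          = ((SVA.jN N * (SVA.Lp (SVA.jN N) + 1) : ℕ):ℝ) := by push_cast; ring
        _ ≤ ((N-1:ℕ):ℝ) := Nat.cast_le.mpr hmnnat
    have hT1 : |∑ i ∈ Finset.range (SVA.Lp (SVA.jN N) + 1),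
            ((((SVA.C μT (SVA.jN N) (N-1) (i+1)):ℝ) - ((SVA.C μT (SVA.jN N) (N-1) i):ℝ))
              / ((N-1:ℕ):ℝ)) * f (SVA.pt (SVA.jN N) i)
          - ∑ i ∈ Finset.range (SVA.Lp (SVA.jN N) + 1),
              SVA.w' μT (SVA.jN N) i * f (SVA.pt (SVA.jN N) i)|
        ≤ 2*‖f‖*((SVA.jN N:ℝ))⁻¹ := by
      rw [← Finset.sum_sub_distrib]
      have heach : ∀ i ∈ Finset.range (SVA.Lp (SVA.jN N) + 1),
          |((((SVA.C μT (SVA.jN N) (N-1) (i+1)):ℝ) - ((SVA.C μT (SVA.jN N) (N-1) i):ℝ))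
              / ((N-1:ℕ):ℝ)) * f (SVA.pt (SVA.jN N) i)
            - SVA.w' μT (SVA.jN N) i * f (SVA.pt (SVA.jN N) i)|
          ≤ (2 / ((N-1:ℕ):ℝ)) * ‖f‖ := by
        intro i _
        have hce := SVA.count_err hj μT (N-1) i
        have hfb : |f (SVA.pt (SVA.jN N) i)| ≤ ‖f‖ := by
          rw [← Real.norm_eq_abs]; exact f.norm_coe_le_norm _
        have hkey : |(((SVA.C μT (SVA.jN N) (N-1) (i+1)):ℝ) - ((SVA.C μT (SVA.jN N) (N-1) i):ℝ))
              / ((N-1:ℕ):ℝ) - SVA.w' μT (SVA.jN N) i| ≤ 2 / ((N-1:ℕ):ℝ) := by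
          have heq2 : (((SVA.C μT (SVA.jN N) (N-1) (i+1)):ℝ) - ((SVA.C μT (SVA.jN N) (N-1) i):ℝ))
              / ((N-1:ℕ):ℝ) - SVA.w' μT (SVA.jN N) i
              = ((((SVA.C μT (SVA.jN N) (N-1) (i+1)):ℝ) - ((SVA.C μT (SVA.jN N) (N-1) i):ℝ))
                - ((N-1:ℕ):ℝ) * SVA.w' μT (SVA.jN N) i) / ((N-1:ℕ):ℝ) := by
            rw [eq_div_iff hnpos.ne', sub_mul, div_mul_cancel₀ _ hnpos.ne']
            ring
          rw [heq2, abs_div, abs_of_pos hnpos]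
          exact div_le_div_of_nonneg_right hce hnpos.le |>.trans_eq rfl
        calc |_ - _| = |((((SVA.C μT (SVA.jN N) (N-1) (i+1)):ℝ) - ((SVA.C μT (SVA.jN N) (N-1) i):ℝ))
              / ((N-1:ℕ):ℝ) - SVA.w' μT (SVA.jN N) i) * f (SVA.pt (SVA.jN N) i)| := by ring_nf
          _ = |(((SVA.C μT (SVA.jN N) (N-1) (i+1)):ℝ) - ((SVA.C μT (SVA.jN N) (N-1) i):ℝ))
              / ((N-1:ℕ):ℝ) - SVA.w' μT (SVA.jN N) i| * |f (SVA.pt (SVA.jN N) i)| := abs_mul _ _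
          _ ≤ (2 / ((N-1:ℕ):ℝ)) * ‖f‖ := by
              apply mul_le_mul hkey hfb (abs_nonneg _) (by positivity)
      calc |∑ i ∈ Finset.range (SVA.Lp (SVA.jN N) + 1), _|
          ≤ ∑ i ∈ Finset.range (SVA.Lp (SVA.jN N) + 1),
              |((((SVA.C μT (SVA.jN N) (N-1) (i+1)):ℝ) - ((SVA.C μT (SVA.jN N) (N-1) i):ℝ))
              / ((N-1:ℕ):ℝ)) * f (SVA.pt (SVA.jN N) i)
            - SVA.w' μT (SVA.jN N) i * f (SVA.pt (SVA.jN N) i)| := Finset.abs_sum_le_sum_abs _ _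
        _ ≤ ∑ i ∈ Finset.range (SVA.Lp (SVA.jN N) + 1), (2 / ((N-1:ℕ):ℝ)) * ‖f‖ :=
            Finset.sum_le_sum heach
        _ = ((SVA.Lp (SVA.jN N) + 1 : ℕ):ℝ) * ((2 / ((N-1:ℕ):ℝ)) * ‖f‖) := by
            rw [Finset.sum_const, Finset.card_range, nsmul_eq_mul]
        _ = 2*‖f‖*(((SVA.Lp (SVA.jN N) + 1 : ℕ):ℝ) / ((N-1:ℕ):ℝ)) := by ring
        _ ≤ 2*‖f‖*((SVA.jN N:ℝ))⁻¹ := by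
            apply mul_le_mul_of_nonneg_left hmn (by positivity)
    have hT2 : |∑ i ∈ Finset.range (SVA.Lp (SVA.jN N) + 1),
              SVA.w' μT (SVA.jN N) i * f (SVA.pt (SVA.jN N) i)
          - ∑ i ∈ Finset.range (SVA.Lp (SVA.jN N) + 1),
              SVA.w μT (SVA.jN N) i * f (SVA.pt (SVA.jN N) i)|
        ≤ 2*‖f‖*((SVA.jN N:ℝ))⁻¹ := by
      rw [← Finset.sum_sub_distrib]
      have heach : ∀ i ∈ Finset.range (SVA.Lp (SVA.jN N) + 1),
          |SVA.w' μT (SVA.jN N) i * f (SVA.pt (SVA.jN N) i)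
            - SVA.w μT (SVA.jN N) i * f (SVA.pt (SVA.jN N) i)|
          ≤ ((SVA.jN N:ℝ))⁻¹/(((SVA.Lp (SVA.jN N)):ℝ)+1) * ‖f‖
            + ((SVA.jN N:ℝ))⁻¹ * SVA.w μT (SVA.jN N) i * ‖f‖ := by
        intro i _
        have hfb : |f (SVA.pt (SVA.jN N) i)| ≤ ‖f‖ := by
          rw [← Real.norm_eq_abs]; exact f.norm_coe_le_norm _
        have hwnn := SVA.w_nonneg (j := SVA.jN N) μT i
        have hkey : |SVA.w' μT (SVA.jN N) i - SVA.w μT (SVA.jN N) i|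
            ≤ ((SVA.jN N:ℝ))⁻¹/(((SVA.Lp (SVA.jN N)):ℝ)+1)
              + ((SVA.jN N:ℝ))⁻¹ * SVA.w μT (SVA.jN N) i := by
          have heq3 : SVA.w' μT (SVA.jN N) i - SVA.w μT (SVA.jN N) i
              = ((SVA.jN N:ℝ))⁻¹/(((SVA.Lp (SVA.jN N)):ℝ)+1)
                - ((SVA.jN N:ℝ))⁻¹ * SVA.w μT (SVA.jN N) i := by
            rw [SVA.w']; ring
          rw [heq3]
          refine le_trans (abs_sub _ _) ?_
          rw [abs_of_nonneg (by positivity), abs_of_nonneg (by positivity)]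
        calc |SVA.w' μT (SVA.jN N) i * f (SVA.pt (SVA.jN N) i)
            - SVA.w μT (SVA.jN N) i * f (SVA.pt (SVA.jN N) i)|
            = |SVA.w' μT (SVA.jN N) i - SVA.w μT (SVA.jN N) i| * |f (SVA.pt (SVA.jN N) i)| := by
              rw [← abs_mul]; ring_nf
          _ ≤ (((SVA.jN N:ℝ))⁻¹/(((SVA.Lp (SVA.jN N)):ℝ)+1)
              + ((SVA.jN N:ℝ))⁻¹ * SVA.w μT (SVA.jN N) i) * ‖f‖ :=
              mul_le_mul hkey hfb (abs_nonneg _) (by positivity)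
          _ = ((SVA.jN N:ℝ))⁻¹/(((SVA.Lp (SVA.jN N)):ℝ)+1) * ‖f‖
              + ((SVA.jN N:ℝ))⁻¹ * SVA.w μT (SVA.jN N) i * ‖f‖ := by ring
      calc |∑ i ∈ Finset.range (SVA.Lp (SVA.jN N) + 1), _|
          ≤ ∑ i ∈ Finset.range (SVA.Lp (SVA.jN N) + 1),
            |SVA.w' μT (SVA.jN N) i * f (SVA.pt (SVA.jN N) i)
              - SVA.w μT (SVA.jN N) i * f (SVA.pt (SVA.jN N) i)| := Finset.abs_sum_le_sum_abs _ _
        _ ≤ ∑ i ∈ Finset.range (SVA.Lp (SVA.jN N) + 1),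
            (((SVA.jN N:ℝ))⁻¹/(((SVA.Lp (SVA.jN N)):ℝ)+1) * ‖f‖
              + ((SVA.jN N:ℝ))⁻¹ * SVA.w μT (SVA.jN N) i * ‖f‖) := Finset.sum_le_sum heach
        _ = ((SVA.Lp (SVA.jN N) + 1 : ℕ):ℝ) * (((SVA.jN N:ℝ))⁻¹/(((SVA.Lp (SVA.jN N)):ℝ)+1) * ‖f‖)
            + ((SVA.jN N:ℝ))⁻¹ * (∑ i ∈ Finset.range (SVA.Lp (SVA.jN N) + 1),
                SVA.w μT (SVA.jN N) i) * ‖f‖ := by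
            rw [Finset.sum_add_distrib, Finset.sum_const, Finset.card_range, nsmul_eq_mul]
            congr 1
            rw [Finset.mul_sum, Finset.sum_mul]
        _ = 2*‖f‖*((SVA.jN N:ℝ))⁻¹ := by
            rw [SVA.sum_w hj μT]
            have hLne : (((SVA.Lp (SVA.jN N)):ℝ)+1) ≠ 0 := by positivity
            have hcast2 : ((SVA.Lp (SVA.jN N) + 1 : ℕ):ℝ) = ((SVA.Lp (SVA.jN N)):ℝ)+1 := by
              push_cast; ring
            rw [hcast2]
            field_simp
            ring
    have hT3 : |∑ i ∈ Finset.range (SVA.Lp (SVA.jN N) + 1),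
            SVA.w μT (SVA.jN N) i * f (SVA.pt (SVA.jN N) i) - ∫ x, f x ∂μT| ≤ ε/2 :=
      hj₀ (SVA.jN N) (le_trans (le_trans (le_max_left _ _) hjge) le_rfl)
    -- small mesh term
    have hsmall : 4*‖f‖*((SVA.jN N:ℝ))⁻¹ < ε/2 := by
      have hj2le : (j₂:ℝ) ≤ (SVA.jN N:ℝ) := by
        exact_mod_cast le_trans (le_max_right j₀ j₂) hjge
      have h8 : 8*‖f‖ < ε * (j₂:ℝ) := by
        have := (div_lt_iff₀ hε).mp hj₂
        linarith
      have h8' : 8*‖f‖ < ε * (SVA.jN N:ℝ) := by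
        have : ε * (j₂:ℝ) ≤ ε * (SVA.jN N:ℝ) := mul_le_mul_of_nonneg_left hj2le hε.le
        linarith
      rw [mul_comm (4*‖f‖) _, inv_mul_eq_div, div_lt_iff₀ hjpos]
      linarith
    calc |∑ i ∈ Finset.range (SVA.Lp (SVA.jN N) + 1),
            ((((SVA.C μT (SVA.jN N) (N-1) (i+1)):ℝ) - ((SVA.C μT (SVA.jN N) (N-1) i):ℝ))
              / ((N-1:ℕ):ℝ)) * f (SVA.pt (SVA.jN N) i) - ∫ x, f x ∂μT|
        ≤ |∑ i ∈ Finset.range (SVA.Lp (SVA.jN N) + 1),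
            ((((SVA.C μT (SVA.jN N) (N-1) (i+1)):ℝ) - ((SVA.C μT (SVA.jN N) (N-1) i):ℝ))
              / ((N-1:ℕ):ℝ)) * f (SVA.pt (SVA.jN N) i)
          - ∑ i ∈ Finset.range (SVA.Lp (SVA.jN N) + 1),
              SVA.w' μT (SVA.jN N) i * f (SVA.pt (SVA.jN N) i)|
          + |∑ i ∈ Finset.range (SVA.Lp (SVA.jN N) + 1),
              SVA.w' μT (SVA.jN N) i * f (SVA.pt (SVA.jN N) i)
            - ∑ i ∈ Finset.range (SVA.Lp (SVA.jN N) + 1),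
              SVA.w μT (SVA.jN N) i * f (SVA.pt (SVA.jN N) i)|
          + |∑ i ∈ Finset.range (SVA.Lp (SVA.jN N) + 1),
              SVA.w μT (SVA.jN N) i * f (SVA.pt (SVA.jN N) i) - ∫ x, f x ∂μT| :=
          abs_sub_abs_triangle3 _ _ _ _
      _ < ε := by linarith
end
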